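/- arXiv:2402.12961 — 8 statements merged into one kernel-verified Lean document; each statement's English description precedes it below -/
import Mathlib

section
/- Let T ∈ B_{A^{1/2}}(H) and suppose the range of A is closed. Then for every λ ∈ ℂ with |λ| > ‖T‖_A, the operator λI − T is A-invertible in B_{A^{1/2}}(H), i.e., λ ∈ ρ_A(T). -/
set_option linter.unusedSectionVars false


variable {H : Type*} [NormedAddCommGroup H] [InnerProductSpace ℂ H] [CompleteSpace H]

/-- The semi-norm `‖x‖_A = ⟨Ax, x⟩^{1/2}` induced by a positive operator `A`. -/
noncomputable def anorm (A : H →L[ℂ] H) (x : H) : ℝ :=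
  Real.sqrt (RCLike.re (inner ℂ (A x) x : ℂ))

/-- Membership in `B_{A^{1/2}}(H)`: there is `c > 0` with `‖Tx‖_A ≤ c ‖x‖_A` for all `x`. -/
def MemBA (A T : H →L[ℂ] H) : Prop :=
  ∃ c > 0, ∀ x : H, anorm A (T x) ≤ c * anorm A x

/-- The `A`-operator seminorm `‖T‖_A`: the least `c ≥ 0` with `‖Tx‖_A ≤ c ‖x‖_A` for all `x`. -/
noncomputable def opANorm (A T : H →L[ℂ] H) : ℝ :=
  sInf {c : ℝ | 0 ≤ c ∧ ∀ x : H, anorm A (T x) ≤ c * anorm A x}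

/-- `T` is `A`-invertible in `B_{A^{1/2}}(H)`. -/
def AInv (A T : H →L[ℂ] H) : Prop :=
  T ≠ 0 ∧ ∃ S : H →L[ℂ] H, S ≠ 0 ∧ MemBA A S ∧
    A.comp (T.comp S) = A ∧ A.comp (S.comp T) = A

/-- The `A`-resolvent set `ρ_A(T)`. -/
def rhoA (A T : H →L[ℂ] H) : Set ℂ :=
  {lam : ℂ | AInv A (lam • (1 : H →L[ℂ] H) - T)}

/-- The `A`-spectrum `σ_A(T)`. -/
def sigmaA (A T : H →L[ℂ] H) : Set ℂ := (rhoA A T)ᶜ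

/-- The `A`-spectral radius `r_A(T) = inf_{n ≥ 1} ‖T^n‖_A^{1/n}`. -/
noncomputable def rA (A T : H →L[ℂ] H) : ℝ :=
  ⨅ n : ℕ+, (opANorm A (T ^ (n : ℕ))) ^ ((((n : ℕ) : ℝ))⁻¹)

/-- `sup {|λ| : λ ∈ σ_A(T)}`. -/
noncomputable def supSpecA (A T : H →L[ℂ] H) : ℝ :=
  sSup ((fun z : ℂ => ‖z‖) '' sigmaA A T)

/-- `S` is the `A^{1/2}`-adjoint `T^⋄` of `T`. -/
def IsDiamond (sqrtA T S : H →L[ℂ] H) : Prop :=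
  sqrtA.comp S = (ContinuousLinearMap.adjoint T).comp sqrtA ∧
    Set.range (⇑S) ⊆ closure (Set.range (⇑sqrtA))

/-- The orthogonal projection of `H` onto the closure of the range of `A`. -/
noncomputable def projA (A : H →L[ℂ] H) : H →L[ℂ] H :=
  haveI : CompleteSpace ((LinearMap.range (A : H →ₗ[ℂ] H)).topologicalClosure : Submodule ℂ H) :=
    (Submodule.isClosed_topologicalClosure _).completeSpace_coe
  ((LinearMap.range (A : H →ₗ[ℂ] H)).topologicalClosure.subtypeL).comp
    (Submodule.orthogonalProjectionOnto (LinearMap.range (A : H →ₗ[ℂ] H)).topologicalClosure)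

namespace APx

noncomputable def apCore (A : H →L[ℂ] H) (hA : A.IsPositive) : PreInnerProductSpace.Core ℂ H :=
  { inner := fun x y => inner ℂ (A x) y
    conj_inner_symm := fun x y => by
      calc (starRingEnd ℂ) (inner ℂ (A y) x : ℂ) = inner ℂ x (A y) := by rw [inner_conj_symm]
        _ = inner ℂ (A x) y := by
            have := hA.isSelfAdjoint.isSymmetric x y
            simpa using this.symm
    re_inner_nonneg := fun x => hA.re_inner_nonneg_left x
    add_left := fun x y z => by simp [inner_add_left]
    smul_left := fun x y r => by simp [inner_smul_left, mul_comm] }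

theorem anorm_nonneg (A : H →L[ℂ] H) (x : H) : 0 ≤ anorm A x := Real.sqrt_nonneg _

theorem anorm_sq (A : H →L[ℂ] H) (hA : A.IsPositive) (x : H) :
    anorm A x ^ 2 = RCLike.re (inner ℂ (A x) x : ℂ) :=
  Real.sq_sqrt (hA.re_inner_nonneg_left x)

theorem cs (A : H →L[ℂ] H) (hA : A.IsPositive) (x y : H) :
    ‖(inner ℂ (A x) y : ℂ)‖ ≤ anorm A x * anorm A y := by
  have h : ‖(inner ℂ (A x) y : ℂ)‖ * ‖(inner ℂ (A y) x : ℂ)‖ ≤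
      RCLike.re (inner ℂ (A x) x : ℂ) * RCLike.re (inner ℂ (A y) y : ℂ) :=
    InnerProductSpace.Core.inner_mul_inner_self_le (c := apCore A hA) x y
  have hsymm : ‖(inner ℂ (A y) x : ℂ)‖ = ‖(inner ℂ (A x) y : ℂ)‖ := by
    have hcs : (starRingEnd ℂ) (inner ℂ (A y) x : ℂ) = inner ℂ (A x) y := by
      rw [inner_conj_symm]
      have := hA.isSelfAdjoint.isSymmetric x y
      simpa using this.symm
    rw [← hcs, RCLike.norm_conj]
  rw [hsymm, ← anorm_sq A hA x, ← anorm_sq A hA y] at h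
  nlinarith [h, anorm_nonneg A x, anorm_nonneg A y,
    norm_nonneg (inner ℂ (A x) y : ℂ),
    mul_nonneg (anorm_nonneg A x) (anorm_nonneg A y)]

theorem anorm_eq_zero (A : H →L[ℂ] H) (hA : A.IsPositive) {x : H}
    (h : anorm A x = 0) : A x = 0 := by
  have h1 := cs A hA x (A x)
  rw [h, zero_mul] at h1
  have : (inner ℂ (A x) (A x) : ℂ) = 0 := by
    have := norm_nonneg (inner ℂ (A x) (A x) : ℂ)
    have hz : ‖(inner ℂ (A x) (A x) : ℂ)‖ = 0 := le_antisymm h1 this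
    exact norm_eq_zero.1 hz
  exact inner_self_eq_zero.1 this

theorem anorm_le_norm (A : H →L[ℂ] H) (x : H) :
    anorm A x ≤ Real.sqrt ‖A‖ * ‖x‖ := by
  have h1 : RCLike.re (inner ℂ (A x) x : ℂ) ≤ ‖A‖ * ‖x‖ ^ 2 := by
    calc RCLike.re (inner ℂ (A x) x : ℂ) ≤ ‖(inner ℂ (A x) x : ℂ)‖ := RCLike.re_le_norm _
      _ ≤ ‖A x‖ * ‖x‖ := norm_inner_le_norm _ _
      _ ≤ ‖A‖ * ‖x‖ * ‖x‖ := by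
          have := A.le_opNorm x
          exact mul_le_mul_of_nonneg_right this (norm_nonneg x)
      _ = ‖A‖ * ‖x‖ ^ 2 := by ring
  calc anorm A x ≤ Real.sqrt (‖A‖ * ‖x‖ ^ 2) := Real.sqrt_le_sqrt h1
    _ = Real.sqrt ‖A‖ * ‖x‖ := by
        rw [Real.sqrt_mul (norm_nonneg A), Real.sqrt_sq (norm_nonneg x)]

theorem anorm_smul (A : H →L[ℂ] H) (a : ℂ) (x : H) :
    anorm A (a • x) = ‖a‖ * anorm A x := by
  unfold anorm
  have h0 : (inner ℂ (A (a • x)) (a • x) : ℂ) = ((‖a‖ ^ 2 : ℝ) : ℂ) * inner ℂ (A x) x := by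
    rw [map_smul, inner_smul_left, inner_smul_right, ← mul_assoc, RCLike.conj_mul]
    norm_cast
  rw [h0]
  simp only [RCLike.re_to_complex, Complex.re_ofReal_mul]
  rw [Real.sqrt_mul (by positivity), Real.sqrt_sq (norm_nonneg a)]

theorem norm_A_apply_le (A : H →L[ℂ] H) (hA : A.IsPositive) (x : H) :
    ‖A x‖ ≤ Real.sqrt ‖A‖ * anorm A x := by
  rcases eq_or_ne (A x) 0 with h | h
  · rw [h, norm_zero]
    exact mul_nonneg (Real.sqrt_nonneg _) (anorm_nonneg A x)
  · have h1 : ‖A x‖ * ‖A x‖ ≤ (anorm A x * Real.sqrt ‖A‖) * ‖A x‖ := by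
      calc ‖A x‖ * ‖A x‖ = ‖(inner ℂ (A x) (A x) : ℂ)‖ := by
            rw [inner_self_eq_norm_sq_to_K (𝕜 := ℂ) (A x)]
            simp [RCLike.norm_ofReal, abs_norm, sq]
        _ ≤ anorm A x * anorm A (A x) := cs A hA x (A x)
        _ ≤ anorm A x * (Real.sqrt ‖A‖ * ‖A x‖) :=
            mul_le_mul_of_nonneg_left (anorm_le_norm A (A x)) (anorm_nonneg A x)
        _ = (anorm A x * Real.sqrt ‖A‖) * ‖A x‖ := by ring
    have := mul_le_mul_of_nonneg_right (le_refl (1:ℝ)) (norm_nonneg (A x))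
    have hpos : 0 < ‖A x‖ := norm_pos_iff.2 h
    have := (mul_le_mul_iff_left₀ hpos).1 h1
    linarith [this]

theorem opANorm_nonneg_and_bound (A T : H →L[ℂ] H) (hT : MemBA A T) :
    0 ≤ opANorm A T ∧ ∀ x, anorm A (T x) ≤ opANorm A T * anorm A x := by
  obtain ⟨c, hc0, hcb⟩ := hT
  have hne : {c : ℝ | 0 ≤ c ∧ ∀ x : H, anorm A (T x) ≤ c * anorm A x}.Nonempty :=
    ⟨c, le_of_lt hc0, hcb⟩
  have hbdd : BddBelow {c : ℝ | 0 ≤ c ∧ ∀ x : H, anorm A (T x) ≤ c * anorm A x} :=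
    ⟨0, fun b hb => hb.1⟩
  constructor
  · exact le_csInf hne (fun b hb => hb.1)
  · intro x
    rcases eq_or_lt_of_le (anorm_nonneg A x) with h0 | h0
    · have : anorm A (T x) ≤ 0 := by
        have := hcb x; rw [← h0] at this; simpa using this
      rw [← h0, mul_zero]; exact this
    · have hd : anorm A (T x) / anorm A x ≤ opANorm A T := by
        apply le_csInf hne
        intro b hb
        rw [div_le_iff₀ h0]
        exact hb.2 x
      calc anorm A (T x) = anorm A (T x) / anorm A x * anorm A x := by field_simp
        _ ≤ opANorm A T * anorm A x := mul_le_mul_of_nonneg_right hd (le_of_lt h0)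

end APx


set_option maxHeartbeats 1000000 in
theorem stmt0 (A T : H →L[ℂ] H) (hA : A.IsPositive) (hA0 : A ≠ 0)
    (hT : MemBA A T) (hclosed : IsClosed (Set.range (⇑A)))
    (lam : ℂ) (hlam : opANorm A T < ‖lam‖) :
    lam ∈ rhoA A T := by
  classical
  obtain ⟨hc0, hcb⟩ := APx.opANorm_nonneg_and_bound A T hT
  have hnl : 0 < ‖lam‖ := lt_of_le_of_lt hc0 hlam
  have hlam0 : lam ≠ 0 := norm_pos_iff.1 hnl
  haveI : CompleteSpace ((LinearMap.range (A : H →ₗ[ℂ] H)).topologicalClosure : Submodule ℂ H) :=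
    (Submodule.isClosed_topologicalClosure _).completeSpace_coe
  set Mc : Submodule ℂ H := (LinearMap.range (A : H →ₗ[ℂ] H)).topologicalClosure with hMcdef
  set P : H →L[ℂ] H := projA A with hPdef
  have hP_apply : ∀ x : H, P x = ((Mc.orthogonalProjectionOnto x : H)) := fun _ => rfl
  have hranM : ∀ y : H, A y ∈ Mc := by
    intro y
    rw [hMcdef]
    exact Submodule.le_topologicalClosure _ (LinearMap.mem_range.2 ⟨y, rfl⟩)
  have hsym : ∀ x y : H, (inner ℂ (A x) y : ℂ) = inner ℂ x (A y) := by
    intro x y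
    have := hA.isSelfAdjoint.isSymmetric x y
    simpa using this
  have horthA : ∀ v ∈ Mcᗮ, A v = 0 := by
    intro v hv
    have h2 : (inner ℂ (A (A v)) v : ℂ) = 0 :=
      (Submodule.mem_orthogonal Mc v).1 hv _ (hranM (A v))
    have h1 : (inner ℂ (A v) (A v) : ℂ) = 0 := by
      rw [hsym v (A v), ← inner_conj_symm, h2, map_zero]
    exact inner_self_eq_zero.1 h1
  have hsub : ∀ x : H, x - P x ∈ Mcᗮ := by
    intro x
    rw [hP_apply x]
    exact Mc.sub_starProjection_mem_orthogonal x
  have hAP : ∀ x : H, A (P x) = A x := by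
    intro x
    have h1 := horthA _ (hsub x)
    rw [map_sub] at h1
    exact (sub_eq_zero.1 h1).symm
  have hclosed' : IsClosed ((LinearMap.range (A : H →ₗ[ℂ] H) : Submodule ℂ H) : Set H) := by
    have h1 : ((LinearMap.range (A : H →ₗ[ℂ] H) : Submodule ℂ H) : Set H) = Set.range (⇑A) := by
      ext z; simp [LinearMap.mem_range, Set.mem_range]
    rw [h1]; exact hclosed
  have hMeq : Mc = LinearMap.range (A : H →ₗ[ℂ] H) := by
    rw [hMcdef]; exact hclosed'.submodule_topologicalClosure_eq
  have hkerM : ∀ v : H, A v = 0 → v ∈ Mcᗮ := by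
    intro v hv
    rw [Submodule.mem_orthogonal]
    intro u hu
    rw [hMeq] at hu
    obtain ⟨y, hy⟩ := LinearMap.mem_range.1 hu
    rw [← hy, ContinuousLinearMap.coe_coe, hsym y v, hv, inner_zero_right]
  have hPzero : ∀ v : H, A v = 0 → P v = 0 := by
    intro v hv
    rw [hP_apply,
      Submodule.orthogonalProjectionOnto_apply_of_mem_orthogonal (hkerM v hv)]
    simp
  have hPP : ∀ x : H, P (P x) = P x := by
    intro x
    rw [hP_apply x, hP_apply, Submodule.orthogonalProjectionOnto_mem_subspace_eq_self]
  have hanormP : ∀ x : H, anorm A (P x) = anorm A x := by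
    intro x
    unfold anorm
    congr 2
    have h3 : (inner ℂ (A x) (x - P x) : ℂ) = 0 :=
      Submodule.inner_right_of_mem_orthogonal (hranM x) (hsub x)
    rw [inner_sub_right] at h3
    rw [hAP]
    exact (sub_eq_zero.1 h3).symm
  -- bounded below on the range
  haveI hcompl : CompleteSpace (LinearMap.range (A : H →ₗ[ℂ] H) : Submodule ℂ H) :=
    hclosed'.completeSpace_coe
  set g : Mc →L[ℂ] (LinearMap.range (A : H →ₗ[ℂ] H) : Submodule ℂ H) :=
    (A.comp Mc.subtypeL).codRestrict (LinearMap.range (A : H →ₗ[ℂ] H))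
      (fun u => LinearMap.mem_range.2 ⟨u, rfl⟩) with hgdef
  have hg_apply : ∀ u : Mc, ((g u : H)) = A (u : H) := by
    intro u; rw [hgdef]; rfl
  have hgker : LinearMap.ker (g : Mc →ₗ[ℂ] (LinearMap.range (A : H →ₗ[ℂ] H))) = ⊥ := by
    rw [LinearMap.ker_eq_bot']
    intro u hu
    have hAu : A (u : H) = 0 := by
      rw [ContinuousLinearMap.coe_coe] at hu; rw [← hg_apply u, hu]; rfl
    have hu1 : (u : H) ∈ Mcᗮ := hkerM _ hAu
    have h2 : (inner ℂ ((u : H)) ((u : H)) : ℂ) = 0 :=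
      Submodule.inner_right_of_mem_orthogonal u.2 hu1
    exact Subtype.ext (inner_self_eq_zero.1 h2)
  have hgrange : LinearMap.range (g : Mc →ₗ[ℂ] (LinearMap.range (A : H →ₗ[ℂ] H))) = ⊤ := by
    rw [LinearMap.range_eq_top]
    intro w
    obtain ⟨x, hx⟩ := LinearMap.mem_range.1 w.2
    have hm : P x ∈ Mc := by rw [hP_apply]; exact SetLike.coe_mem _
    refine ⟨⟨P x, hm⟩, ?_⟩
    apply Subtype.ext
    rw [ContinuousLinearMap.coe_coe, hg_apply]
    show A (P x) = (w : H)
    rw [hAP, ← hx, ContinuousLinearMap.coe_coe]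
  set e : Mc ≃L[ℂ] (LinearMap.range (A : H →ₗ[ℂ] H) : Submodule ℂ H) :=
    ContinuousLinearEquiv.ofBijective g hgker hgrange with hedef
  set K : ℝ := ‖(e.symm : (LinearMap.range (A : H →ₗ[ℂ] H) : Submodule ℂ H) →L[ℂ] Mc)‖ + 1 with hKdef
  have hK0 : 0 < K := by
    rw [hKdef]; positivity
  have hKbound : ∀ u : Mc, ‖(u : H)‖ ≤ K * ‖A (u : H)‖ := by
    intro u
    have h2 := (e.symm : (LinearMap.range (A : H →ₗ[ℂ] H) : Submodule ℂ H) →L[ℂ] Mc).le_opNorm (e u)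
    rw [ContinuousLinearEquiv.coe_coe, e.symm_apply_apply] at h2
    have h3 : ‖e u‖ = ‖A (u : H)‖ := by
      have he : e u = g u := by rw [hedef]; rfl
      rw [he]
      show ‖(g u : H)‖ = ‖A (u : H)‖
      rw [hg_apply]
    have h4 : ‖(u : H)‖ = ‖u‖ := rfl
    rw [h4]
    calc ‖u‖ ≤ ‖(e.symm : (LinearMap.range (A : H →ₗ[ℂ] H) : Submodule ℂ H) →L[ℂ] Mc)‖ * ‖e u‖ := h2
      _ ≤ K * ‖e u‖ := by
          apply mul_le_mul_of_nonneg_right _ (norm_nonneg _)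
          rw [hKdef]; linarith
      _ = K * ‖A (u : H)‖ := by rw [h3]
  have hPx_le : ∀ x : H, ‖P x‖ ≤ (K * Real.sqrt ‖A‖) * anorm A x := by
    intro x
    have hm : P x ∈ Mc := by rw [hP_apply]; exact SetLike.coe_mem _
    have h1 : ‖P x‖ ≤ K * ‖A (P x)‖ := hKbound ⟨P x, hm⟩
    rw [hAP] at h1
    calc ‖P x‖ ≤ K * ‖A x‖ := h1
      _ ≤ K * (Real.sqrt ‖A‖ * anorm A x) :=
          mul_le_mul_of_nonneg_left (APx.norm_A_apply_le A hA x) (le_of_lt hK0)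
      _ = (K * Real.sqrt ‖A‖) * anorm A x := by ring
  -- the Neumann series
  set C : H →L[ℂ] H := lam⁻¹ • (P * T) with hCdef
  set r : ℝ := opANorm A T / ‖lam‖ with hrdef
  have hr0 : 0 ≤ r := by rw [hrdef]; exact div_nonneg hc0 (le_of_lt hnl)
  have hr1 : r < 1 := by rw [hrdef]; exact (div_lt_one hnl).2 hlam
  have hCx : ∀ x : H, anorm A (C x) ≤ r * anorm A x := by
    intro x
    have h1 : C x = lam⁻¹ • (P (T x)) := by rw [hCdef]; rfl
    rw [h1, APx.anorm_smul, hanormP]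
    calc ‖lam⁻¹‖ * anorm A (T x) ≤ ‖lam⁻¹‖ * (opANorm A T * anorm A x) :=
        mul_le_mul_of_nonneg_left (hcb x) (norm_nonneg _)
      _ = r * anorm A x := by rw [hrdef, norm_inv]; ring
  have hCnx : ∀ (n : ℕ) (x : H), anorm A ((C ^ n) x) ≤ r ^ n * anorm A x := by
    intro n
    induction n with
    | zero => intro x; simp
    | succ n ih =>
      intro x
      have h1 : (C ^ (n + 1)) x = C ((C ^ n) x) := by
        rw [pow_succ', ContinuousLinearMap.mul_apply]
      rw [h1]
      calc anorm A (C ((C ^ n) x)) ≤ r * anorm A ((C ^ n) x) := hCx _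
        _ ≤ r * (r ^ n * anorm A x) := mul_le_mul_of_nonneg_left (ih x) hr0
        _ = r ^ (n + 1) * anorm A x := by ring
  have hPPm : P * P = P := by
    ext x; rw [ContinuousLinearMap.mul_apply]; exact hPP x
  have hPTPm : P * T * P = P * T := by
    ext x
    simp only [ContinuousLinearMap.mul_apply]
    have h1 : A (T (x - P x)) = 0 := by
      apply APx.anorm_eq_zero A hA
      have hv : anorm A (x - P x) = 0 := by
        unfold anorm; rw [horthA _ (hsub x)]; simp
      have h2 := hcb (x - P x)
      rw [hv, mul_zero] at h2
      exact le_antisymm h2 (APx.anorm_nonneg A _)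
    have h2 : P (T (x - P x)) = 0 := hPzero _ h1
    rw [map_sub, map_sub] at h2
    have h3 : P (T x) - P (T (P x)) = 0 := h2
    exact (sub_eq_zero.1 h3).symm
  have hPCm : P * C = C := by
    rw [hCdef, mul_smul_comm, ← mul_assoc, hPPm]
  have hCPm : C * P = C := by
    rw [hCdef, smul_mul_assoc, hPTPm]
  have hCn_norm : ∀ n : ℕ, ‖C ^ (n + 1)‖ ≤ (K * ‖A‖) * r ^ (n + 1) := by
    intro n
    apply ContinuousLinearMap.opNorm_le_bound
    · exact mul_nonneg (mul_nonneg (le_of_lt hK0) (norm_nonneg A)) (pow_nonneg hr0 _)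
    intro x
    have hPfix : P * C ^ (n + 1) = C ^ (n + 1) := by
      rw [pow_succ', ← mul_assoc, hPCm]
    have hfix : (C ^ (n + 1)) x = P ((C ^ (n + 1)) x) := by
      conv_lhs => rw [← hPfix, ContinuousLinearMap.mul_apply]
    calc ‖(C ^ (n + 1)) x‖ = ‖P ((C ^ (n + 1)) x)‖ := by rw [← hfix]
      _ ≤ (K * Real.sqrt ‖A‖) * anorm A ((C ^ (n + 1)) x) := hPx_le _
      _ ≤ (K * Real.sqrt ‖A‖) * (r ^ (n + 1) * anorm A x) :=
          mul_le_mul_of_nonneg_left (hCnx _ x)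
            (mul_nonneg (le_of_lt hK0) (Real.sqrt_nonneg _))
      _ ≤ (K * Real.sqrt ‖A‖) * (r ^ (n + 1) * (Real.sqrt ‖A‖ * ‖x‖)) := by
          apply mul_le_mul_of_nonneg_left _ (mul_nonneg (le_of_lt hK0) (Real.sqrt_nonneg _))
          exact mul_le_mul_of_nonneg_left (APx.anorm_le_norm A x) (pow_nonneg hr0 _)
      _ = (K * (Real.sqrt ‖A‖ * Real.sqrt ‖A‖)) * (r ^ (n + 1) * ‖x‖) := by ring
      _ = (K * ‖A‖) * r ^ (n + 1) * ‖x‖ := by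
          rw [Real.mul_self_sqrt (norm_nonneg A)]; ring
  have hsum : Summable (fun n : ℕ => C ^ n) := by
    apply Summable.of_norm_bounded (g := fun n : ℕ => (max (K * ‖A‖) 1) * r ^ n)
      ((summable_geometric_of_lt_one hr0 hr1).mul_left _)
    intro n
    cases n with
    | zero =>
      simp only [pow_zero, mul_one]
      calc ‖(1 : H →L[ℂ] H)‖ ≤ 1 := by
            rw [ContinuousLinearMap.one_def]; exact ContinuousLinearMap.norm_id_le
        _ ≤ max (K * ‖A‖) 1 := le_max_right _ _
    | succ n =>
      calc ‖C ^ (n + 1)‖ ≤ (K * ‖A‖) * r ^ (n + 1) := hCn_norm n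
        _ ≤ max (K * ‖A‖) 1 * r ^ (n + 1) :=
            mul_le_mul_of_nonneg_right (le_max_left _ _) (pow_nonneg hr0 _)
  set U : H →L[ℂ] H := ∑' n : ℕ, C ^ n with hUdef
  have hCU : C * U = ∑' n : ℕ, C ^ (n + 1) := by
    rw [hUdef, ← Summable.tsum_mul_left C hsum]
    exact tsum_congr fun n => (pow_succ' C n).symm
  have hUC : U * C = ∑' n : ℕ, C ^ (n + 1) := by
    rw [hUdef, ← Summable.tsum_mul_right C hsum]
    exact tsum_congr fun n => (pow_succ C n).symm
  have hU0 : U = 1 + ∑' n : ℕ, C ^ (n + 1) := by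
    rw [hUdef, Summable.tsum_eq_zero_add hsum, pow_zero]
  have hU1 : (1 - C) * U = 1 := by
    rw [sub_mul, one_mul, hCU, hU0, add_sub_cancel_right]
  have hU2 : U * (1 - C) = 1 := by
    rw [mul_sub, mul_one, hUC, hU0, add_sub_cancel_right]
  -- algebraic identities
  have hAPm : A * P = A := by
    ext x; rw [ContinuousLinearMap.mul_apply]; exact hAP x
  have hATm : A * (P * T) = A * T := by rw [← mul_assoc, hAPm]
  have hACm : A * C = lam⁻¹ • (A * T) := by rw [hCdef, mul_smul_comm, hATm]
  have hkey1 : A * (lam • (1 : H →L[ℂ] H) - T) = lam • (A * (1 - C)) := by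
    have h1 : lam • (A * (1 - C)) = lam • A - A * T := by
      rw [mul_sub, mul_one, smul_sub, hACm, smul_smul, mul_inv_cancel₀ hlam0, one_smul]
    rw [h1, mul_sub, mul_smul_comm, mul_one]
  have hkey2 : P * (lam • (1 : H →L[ℂ] H) - T) = lam • ((1 - C) * P) := by
    have h1 : lam • ((1 - C) * P) = lam • P - P * T := by
      rw [sub_mul, one_mul, hCPm, smul_sub, hCdef, smul_smul, mul_inv_cancel₀ hlam0,
        one_smul]
    rw [h1, mul_sub, mul_smul_comm, mul_one]
  set S : H →L[ℂ] H := lam⁻¹ • (U * P) with hSdef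
  have hid1 : A.comp ((lam • (1 : H →L[ℂ] H) - T).comp S) = A := by
    show A * ((lam • (1 : H →L[ℂ] H) - T) * S) = A
    rw [hSdef, mul_smul_comm, mul_smul_comm, ← mul_assoc, hkey1, smul_mul_assoc,
      smul_smul, inv_mul_cancel₀ hlam0, one_smul, ← mul_assoc, mul_assoc A (1 - C) U,
      hU1, mul_one, hAPm]
  have hid2 : A.comp (S.comp (lam • (1 : H →L[ℂ] H) - T)) = A := by
    show A * (S * (lam • (1 : H →L[ℂ] H) - T)) = A
    rw [hSdef, smul_mul_assoc, mul_smul_comm, mul_assoc, hkey2, mul_smul_comm,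
      mul_smul_comm, smul_smul, inv_mul_cancel₀ hlam0, one_smul, ← mul_assoc,
      ← mul_assoc, mul_assoc A U (1 - C), hU2, mul_one, hAPm]
  have hSne : S ≠ 0 := by
    intro h
    rw [h] at hid2
    simp only [ContinuousLinearMap.zero_comp, ContinuousLinearMap.comp_zero] at hid2
    exact hA0 hid2.symm
  have hmem : MemBA A S := by
    have hXnn : 0 ≤ ‖lam⁻¹‖ * (Real.sqrt ‖A‖ * (‖U‖ * (K * Real.sqrt ‖A‖))) := by
      apply mul_nonneg (norm_nonneg _)
      apply mul_nonneg (Real.sqrt_nonneg _)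
      apply mul_nonneg (norm_nonneg _)
      exact mul_nonneg (le_of_lt hK0) (Real.sqrt_nonneg _)
    refine ⟨‖lam⁻¹‖ * (Real.sqrt ‖A‖ * (‖U‖ * (K * Real.sqrt ‖A‖))) + 1, by linarith, ?_⟩
    intro x
    have hSx : S x = lam⁻¹ • (U (P x)) := by rw [hSdef]; rfl
    calc anorm A (S x) = ‖lam⁻¹‖ * anorm A (U (P x)) := by rw [hSx, APx.anorm_smul]
      _ ≤ ‖lam⁻¹‖ * (Real.sqrt ‖A‖ * ‖U (P x)‖) :=
          mul_le_mul_of_nonneg_left (APx.anorm_le_norm A _) (norm_nonneg _)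
      _ ≤ ‖lam⁻¹‖ * (Real.sqrt ‖A‖ * (‖U‖ * ‖P x‖)) := by
          apply mul_le_mul_of_nonneg_left _ (norm_nonneg _)
          exact mul_le_mul_of_nonneg_left (U.le_opNorm (P x)) (Real.sqrt_nonneg _)
      _ ≤ ‖lam⁻¹‖ * (Real.sqrt ‖A‖ * (‖U‖ * ((K * Real.sqrt ‖A‖) * anorm A x))) := by
          apply mul_le_mul_of_nonneg_left _ (norm_nonneg _)
          apply mul_le_mul_of_nonneg_left _ (Real.sqrt_nonneg _)
          exact mul_le_mul_of_nonneg_left (hPx_le x) (norm_nonneg _)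
      _ = (‖lam⁻¹‖ * (Real.sqrt ‖A‖ * (‖U‖ * (K * Real.sqrt ‖A‖)))) * anorm A x := by
          ring
      _ ≤ (‖lam⁻¹‖ * (Real.sqrt ‖A‖ * (‖U‖ * (K * Real.sqrt ‖A‖))) + 1) * anorm A x :=
          mul_le_mul_of_nonneg_right (by linarith) (APx.anorm_nonneg A x)
  have hTne : lam • (1 : H →L[ℂ] H) - T ≠ 0 := by
    intro h
    have hTeq : T = lam • (1 : H →L[ℂ] H) := (sub_eq_zero.1 h).symm
    obtain ⟨x0, hx0⟩ : ∃ x : H, A x ≠ 0 := by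
      by_contra hno
      push_neg at hno
      exact hA0 (ContinuousLinearMap.ext fun x => by rw [hno x]; rfl)
    have hax : 0 < anorm A x0 := by
      rcases eq_or_lt_of_le (APx.anorm_nonneg A x0) with h0 | h0
      · exact absurd (APx.anorm_eq_zero A hA h0.symm) hx0
      · exact h0
    have hle : ‖lam‖ ≤ opANorm A T := by
      unfold opANorm
      refine le_csInf ⟨opANorm A T, hc0, hcb⟩ ?_
      intro b hb
      have h2 := hb.2 x0
      rw [hTeq] at h2
      have happ : (lam • (1 : H →L[ℂ] H)) x0 = lam • x0 := rfl
      rw [happ, APx.anorm_smul] at h2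
      exact le_of_mul_le_mul_right h2 hax
    exact absurd hlam (not_lt.2 hle)
  show AInv A (lam • (1 : H →L[ℂ] H) - T)
  exact ⟨hTne, S, hSne, hmem, hid1, hid2⟩
end

section
/- Let T ∈ B_{A^{1/2}}(H) and suppose the range of A is closed. Then sup{|λ| : λ ∈ σ_A(T)} = r_A(T). -/
variable {H : Type*} [NormedAddCommGroup H] [InnerProductSpace ℂ H] [CompleteSpace H]

namespace Stmt1Aux

lemma anorm_nonneg (A : H →L[ℂ] H) (x : H) : 0 ≤ anorm A x := Real.sqrt_nonneg _

lemma anorm_sq {A : H →L[ℂ] H} (hA : A.IsPositive) (x : H) :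
    anorm A x ^ 2 = RCLike.re (inner ℂ (A x) x : ℂ) := Real.sq_sqrt (hA.2 x)


lemma posop_inner_symm {A : H →L[ℂ] H} (hA : A.IsPositive) (u v : H) :
    (inner ℂ (A u) v : ℂ) = inner ℂ u (A v) := by
  have h := ContinuousLinearMap.adjoint_inner_left (A := ContinuousLinearMap.adjoint A) v u
  rw [ContinuousLinearMap.adjoint_adjoint] at h
  have h2 := ContinuousLinearMap.adjoint_inner_left (A := A) v u
  rw [hA.isSelfAdjoint.adjoint_eq] at h2
  exact h2

lemma pos_cs {A : H →L[ℂ] H} (hA : A.IsPositive) (x y : H) :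
    ‖(inner ℂ (A x) y : ℂ)‖ * ‖(inner ℂ (A y) x : ℂ)‖ ≤
      RCLike.re (inner ℂ (A x) x : ℂ) * RCLike.re (inner ℂ (A y) y : ℂ) := by
  have hsym : (A : H →ₗ[ℂ] H).IsSymmetric :=
    hA.1
  letI core : PreInnerProductSpace.Core ℂ H :=
    { inner := fun u v => (inner ℂ (A u) v : ℂ)
      conj_inner_symm := fun u v => by
        show (starRingEnd ℂ) (inner ℂ (A v) u : ℂ) = (inner ℂ (A u) v : ℂ)
        rw [inner_conj_symm]
        exact (hsym u v).symm
      re_inner_nonneg := fun u => hA.2 u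
      add_left := fun u v w => by simp [inner_add_left]
      smul_left := fun u v r => by simp [inner_smul_left, mul_comm] }
  exact InnerProductSpace.Core.inner_mul_inner_self_le (𝕜 := ℂ) (F := H) x y

lemma norm_apply_sq_le {A : H →L[ℂ] H} (hA : A.IsPositive) (x : H) :
    ‖A x‖ ^ 2 ≤ ‖A‖ * RCLike.re (inner ℂ (A x) x : ℂ) := by
  rcases eq_or_ne (A x) 0 with h | h
  · have h5 := hA.2 x
    have h6 : ‖A x‖ ^ 2 = 0 := by rw [h]; simp
    rw [h6]
    exact mul_nonneg (norm_nonneg A) h5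
  · have hsym : (A : H →ₗ[ℂ] H).IsSymmetric :=
      hA.1
    have hcs := pos_cs hA x (A x)
    have h1 : (inner ℂ (A x) (A x) : ℂ) = (‖A x‖ : ℂ) ^ 2 := inner_self_eq_norm_sq_to_K (A x)
    have h2 : (inner ℂ (A (A x)) x : ℂ) = (inner ℂ (A x) (A x) : ℂ) := hsym (A x) x
    rw [h2, h1] at hcs
    have h3 : ‖((‖A x‖ : ℂ) ^ 2)‖ = ‖A x‖ ^ 2 := by
      rw [norm_pow, Complex.norm_real, Real.norm_of_nonneg (norm_nonneg _)]
    rw [h3] at hcs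
    have h4 : RCLike.re (inner ℂ (A (A x)) (A x) : ℂ) ≤ ‖A‖ * ‖A x‖ ^ 2 := by
      calc RCLike.re (inner ℂ (A (A x)) (A x) : ℂ) ≤ ‖(inner ℂ (A (A x)) (A x) : ℂ)‖ :=
            RCLike.re_le_norm _
        _ ≤ ‖A (A x)‖ * ‖A x‖ := norm_inner_le_norm _ _
        _ ≤ (‖A‖ * ‖A x‖) * ‖A x‖ := by
            have := A.le_opNorm (A x)
            nlinarith [norm_nonneg (A x)]
        _ = ‖A‖ * ‖A x‖ ^ 2 := by ring
    have h5 : 0 ≤ RCLike.re (inner ℂ (A x) x : ℂ) := hA.2 x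
    have h6 : 0 < ‖A x‖ := norm_pos_iff.mpr h
    nlinarith [hcs, mul_le_mul_of_nonneg_left h4 h5, mul_pos h6 h6, sq_nonneg (‖A x‖)]

lemma opANorm_nonneg (A S : H →L[ℂ] H) : 0 ≤ opANorm A S :=
  Real.sInf_nonneg (fun _ hc => hc.1)

lemma opANorm_bound {A S : H →L[ℂ] H} (hS : MemBA A S) (x : H) :
    anorm A (S x) ≤ opANorm A S * anorm A x := by
  obtain ⟨c, hc, hb⟩ := hS
  have hne : Set.Nonempty {c : ℝ | 0 ≤ c ∧ ∀ x : H, anorm A (S x) ≤ c * anorm A x} :=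
    ⟨c, hc.le, hb⟩
  by_cases h0 : anorm A x = 0
  · have h1 : anorm A (S x) ≤ 0 := by simpa [h0] using hb x
    have h2 := anorm_nonneg A (S x)
    rw [h0, mul_zero]
    linarith
  · have hx : 0 < anorm A x := lt_of_le_of_ne (anorm_nonneg A x) (Ne.symm h0)
    rw [← div_le_iff₀ hx]
    exact le_csInf hne (fun b hb' => (div_le_iff₀ hx).mpr (hb'.2 x))

lemma opANorm_le {A S : H →L[ℂ] H} {c : ℝ} (hc : 0 ≤ c)
    (hb : ∀ x : H, anorm A (S x) ≤ c * anorm A x) : opANorm A S ≤ c :=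
  csInf_le ⟨0, fun _ hb' => hb'.1⟩ ⟨hc, hb⟩


section Core

variable {A S T : H →L[ℂ] H} {K : Submodule ℂ H} [CompleteSpace K] {m M : ℝ}

/-- compression of `S` to `K` -/
noncomputable def tilde (K : Submodule ℂ H) [CompleteSpace K] (S : H →L[ℂ] H) :
    K →L[ℂ] K :=
  Submodule.orthogonalProjectionOnto K ∘L (S ∘L K.subtypeL)

lemma tilde_apply (S : H →L[ℂ] H) (q : K) :
    tilde K S q = Submodule.orthogonalProjectionOnto K (S (q : H)) := rfl

lemma apA_proj (h1 : ∀ w ∈ Kᗮ, A w = 0) (x : H) :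
    A ((Submodule.orthogonalProjectionOnto K x : K) : H) = A x := by
  have h := h1 _ (Submodule.sub_starProjection_mem_orthogonal (K := K) x)
  rw [map_sub, sub_eq_zero] at h
  exact h.symm

lemma re_inner_proj (h1 : ∀ w ∈ Kᗮ, A w = 0) (hK3 : ∀ x : H, A x ∈ K) (x : H) :
    RCLike.re (inner ℂ (A x) x : ℂ) =
      RCLike.re (inner ℂ (A ((Submodule.orthogonalProjectionOnto K x : K) : H))
        ((Submodule.orthogonalProjectionOnto K x : K) : H) : ℂ) := by
  rw [apA_proj h1 x]
  congr 1
  have h0 : (inner ℂ (A x) (x - ((Submodule.orthogonalProjectionOnto K x : K) : H)) : ℂ) = 0 :=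
    Submodule.inner_right_of_mem_orthogonal (hK3 x)
      (Submodule.sub_starProjection_mem_orthogonal x)
  rw [inner_sub_right, sub_eq_zero] at h0
  exact h0

lemma anorm_eq_proj (hA : A.IsPositive) (h1 : ∀ w ∈ Kᗮ, A w = 0) (hK3 : ∀ x : H, A x ∈ K)
    (x : H) :
    anorm A x = Real.sqrt (RCLike.re (inner ℂ (A ((Submodule.orthogonalProjectionOnto K x : K) : H))
      ((Submodule.orthogonalProjectionOnto K x : K) : H) : ℂ)) := by
  unfold anorm
  rw [re_inner_proj h1 hK3 x]

lemma anorm_proj_lower (hA : A.IsPositive) (h1 : ∀ w ∈ Kᗮ, A w = 0) (hK3 : ∀ x : H, A x ∈ K)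
    (hm : 0 < m) (hlo : ∀ p : K, m * ‖p‖ ^ 2 ≤ RCLike.re (inner ℂ (A (p : H)) (p : H) : ℂ))
    (x : H) :
    Real.sqrt m * ‖Submodule.orthogonalProjectionOnto K x‖ ≤ anorm A x := by
  rw [anorm_eq_proj hA h1 hK3 x,
    ← Real.sqrt_sq (norm_nonneg (Submodule.orthogonalProjectionOnto K x)), ← Real.sqrt_mul hm.le]
  exact Real.sqrt_le_sqrt (hlo (Submodule.orthogonalProjectionOnto K x))

lemma anorm_proj_upper (hA : A.IsPositive) (h1 : ∀ w ∈ Kᗮ, A w = 0) (hK3 : ∀ x : H, A x ∈ K)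
    (hM : 0 < M) (hup : ∀ p : K, RCLike.re (inner ℂ (A (p : H)) (p : H) : ℂ) ≤ M * ‖p‖ ^ 2)
    (x : H) :
    anorm A x ≤ Real.sqrt M * ‖Submodule.orthogonalProjectionOnto K x‖ := by
  rw [anorm_eq_proj hA h1 hK3 x,
    ← Real.sqrt_sq (norm_nonneg (Submodule.orthogonalProjectionOnto K x)), ← Real.sqrt_mul hM.le]
  exact Real.sqrt_le_sqrt (hup (Submodule.orthogonalProjectionOnto K x))

lemma anorm_coe_lower (hA : A.IsPositive) (h1 : ∀ w ∈ Kᗮ, A w = 0) (hK3 : ∀ x : H, A x ∈ K)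
    (hm : 0 < m) (hlo : ∀ p : K, m * ‖p‖ ^ 2 ≤ RCLike.re (inner ℂ (A (p : H)) (p : H) : ℂ))
    (q : K) : Real.sqrt m * ‖q‖ ≤ anorm A (q : H) := by
  have h := anorm_proj_lower hA h1 hK3 hm hlo (q : H)
  rwa [Submodule.orthogonalProjectionOnto_mem_subspace_eq_self q] at h

lemma anorm_coe_upper (hA : A.IsPositive) (h1 : ∀ w ∈ Kᗮ, A w = 0) (hK3 : ∀ x : H, A x ∈ K)
    (hM : 0 < M) (hup : ∀ p : K, RCLike.re (inner ℂ (A (p : H)) (p : H) : ℂ) ≤ M * ‖p‖ ^ 2)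
    (q : K) : anorm A (q : H) ≤ Real.sqrt M * ‖q‖ := by
  have h := anorm_proj_upper hA h1 hK3 hM hup (q : H)
  rwa [Submodule.orthogonalProjectionOnto_mem_subspace_eq_self q] at h

end Core


section Core2

variable {A S T : H →L[ℂ] H} {K : Submodule ℂ H} [CompleteSpace K] {m M : ℝ}

lemma proj_comm (hA : A.IsPositive) (h1 : ∀ w ∈ Kᗮ, A w = 0) (hK3 : ∀ x : H, A x ∈ K)
    (hm : 0 < m) (hM : 0 < M)
    (hlo : ∀ p : K, m * ‖p‖ ^ 2 ≤ RCLike.re (inner ℂ (A (p : H)) (p : H) : ℂ))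
    (hup : ∀ p : K, RCLike.re (inner ℂ (A (p : H)) (p : H) : ℂ) ≤ M * ‖p‖ ^ 2)
    (hS : MemBA A S) (x : H) :
    Submodule.orthogonalProjectionOnto K (S x) = tilde K S (Submodule.orthogonalProjectionOnto K x) := by
  obtain ⟨cS, hcS, hSb⟩ := hS
  set w : H := x - ((Submodule.orthogonalProjectionOnto K x : K) : H) with hw
  have hw0 : Submodule.orthogonalProjectionOnto K w = 0 :=
    Submodule.orthogonalProjectionOnto_apply_of_mem_orthogonal
      (Submodule.sub_starProjection_mem_orthogonal x)
  have haw : anorm A w = 0 := by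
    have h := anorm_proj_upper hA h1 hK3 hM hup w
    rw [hw0] at h
    simp only [norm_zero, mul_zero] at h
    exact le_antisymm h (anorm_nonneg A w)
  have hsw : anorm A (S w) = 0 := by
    have h := hSb w
    rw [haw, mul_zero] at h
    exact le_antisymm h (anorm_nonneg A (S w))
  have hpsw : Submodule.orthogonalProjectionOnto K (S w) = 0 := by
    have h := anorm_proj_lower hA h1 hK3 hm hlo (S w)
    rw [hsw] at h
    have hsq := Real.sqrt_pos.mpr hm
    have hn := norm_nonneg (Submodule.orthogonalProjectionOnto K (S w))
    have : ‖Submodule.orthogonalProjectionOnto K (S w)‖ = 0 := by nlinarith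
    exact norm_eq_zero.mp this
  have hx : x = ((Submodule.orthogonalProjectionOnto K x : K) : H) + w := by rw [hw]; abel
  rw [tilde_apply]
  conv_lhs => rw [hx]
  rw [map_add, map_add, hpsw, add_zero]

lemma memBA_of_proj_bound (hA : A.IsPositive) (h1 : ∀ w ∈ Kᗮ, A w = 0) (hK3 : ∀ x : H, A x ∈ K)
    (hm : 0 < m) (hM : 0 < M)
    (hlo : ∀ p : K, m * ‖p‖ ^ 2 ≤ RCLike.re (inner ℂ (A (p : H)) (p : H) : ℂ))
    (hup : ∀ p : K, RCLike.re (inner ℂ (A (p : H)) (p : H) : ℂ) ≤ M * ‖p‖ ^ 2)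
    {C : ℝ} (hC : 0 ≤ C)
    (hb : ∀ x : H, ‖Submodule.orthogonalProjectionOnto K (S x)‖ ≤ C * ‖Submodule.orthogonalProjectionOnto K x‖) :
    MemBA A S := by
  have hsm := Real.sqrt_pos.mpr hm
  have hsM := Real.sqrt_pos.mpr hM
  refine ⟨Real.sqrt M * C / Real.sqrt m + 1, by positivity, fun x => ?_⟩
  have e1 : anorm A (S x) ≤ Real.sqrt M * (C * ‖Submodule.orthogonalProjectionOnto K x‖) := by
    calc anorm A (S x) ≤ Real.sqrt M * ‖Submodule.orthogonalProjectionOnto K (S x)‖ :=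
          anorm_proj_upper hA h1 hK3 hM hup (S x)
      _ ≤ Real.sqrt M * (C * ‖Submodule.orthogonalProjectionOnto K x‖) :=
          mul_le_mul_of_nonneg_left (hb x) hsM.le
  have e2 : ‖Submodule.orthogonalProjectionOnto K x‖ ≤ anorm A x / Real.sqrt m := by
    rw [le_div_iff₀ hsm]
    have := anorm_proj_lower hA h1 hK3 hm hlo x
    linarith
  have e3 : anorm A (S x) ≤ Real.sqrt M * (C * (anorm A x / Real.sqrt m)) := by
    refine e1.trans (mul_le_mul_of_nonneg_left ?_ hsM.le)
    exact mul_le_mul_of_nonneg_left e2 hC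
  have e4 : Real.sqrt M * (C * (anorm A x / Real.sqrt m))
      = (Real.sqrt M * C / Real.sqrt m) * anorm A x := by ring
  rw [e4] at e3
  have e5 : (Real.sqrt M * C / Real.sqrt m) * anorm A x
      ≤ (Real.sqrt M * C / Real.sqrt m + 1) * anorm A x := by
    have := anorm_nonneg A x
    nlinarith
  linarith

lemma tilde_pow (hA : A.IsPositive) (h1 : ∀ w ∈ Kᗮ, A w = 0) (hK3 : ∀ x : H, A x ∈ K)
    (hm : 0 < m) (hM : 0 < M)
    (hlo : ∀ p : K, m * ‖p‖ ^ 2 ≤ RCLike.re (inner ℂ (A (p : H)) (p : H) : ℂ))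
    (hup : ∀ p : K, RCLike.re (inner ℂ (A (p : H)) (p : H) : ℂ) ≤ M * ‖p‖ ^ 2)
    (hT : MemBA A T) (n : ℕ) (x : H) :
    Submodule.orthogonalProjectionOnto K ((T ^ n) x) = ((tilde K T) ^ n) (Submodule.orthogonalProjectionOnto K x) := by
  induction n generalizing x with
  | zero => simp
  | succ n ih =>
    rw [pow_succ, pow_succ, ContinuousLinearMap.mul_apply, ContinuousLinearMap.mul_apply,
      ih (T x), proj_comm hA h1 hK3 hm hM hlo hup hT x]

lemma memBA_pow (hA : A.IsPositive) (h1 : ∀ w ∈ Kᗮ, A w = 0) (hK3 : ∀ x : H, A x ∈ K)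
    (hm : 0 < m) (hM : 0 < M)
    (hlo : ∀ p : K, m * ‖p‖ ^ 2 ≤ RCLike.re (inner ℂ (A (p : H)) (p : H) : ℂ))
    (hup : ∀ p : K, RCLike.re (inner ℂ (A (p : H)) (p : H) : ℂ) ≤ M * ‖p‖ ^ 2)
    (hT : MemBA A T) (n : ℕ) : MemBA A (T ^ n) := by
  refine memBA_of_proj_bound hA h1 hK3 hm hM hlo hup (norm_nonneg ((tilde K T) ^ n))
    (fun x => ?_)
  rw [tilde_pow hA h1 hK3 hm hM hlo hup hT n x]
  exact ((tilde K T) ^ n).le_opNorm _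

lemma cmp1 (hA : A.IsPositive) (h1 : ∀ w ∈ Kᗮ, A w = 0) (hK3 : ∀ x : H, A x ∈ K)
    (hm : 0 < m) (hM : 0 < M)
    (hlo : ∀ p : K, m * ‖p‖ ^ 2 ≤ RCLike.re (inner ℂ (A (p : H)) (p : H) : ℂ))
    (hup : ∀ p : K, RCLike.re (inner ℂ (A (p : H)) (p : H) : ℂ) ≤ M * ‖p‖ ^ 2)
    (hT : MemBA A T) (n : ℕ) :
    ‖(tilde K T) ^ n‖ ≤ (Real.sqrt M / Real.sqrt m) * opANorm A (T ^ n) := by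
  have hsm := Real.sqrt_pos.mpr hm
  have hsM := Real.sqrt_pos.mpr hM
  have hop := opANorm_nonneg A (T ^ n)
  refine ContinuousLinearMap.opNorm_le_bound _ (by positivity) (fun q => ?_)
  have e0 : ((tilde K T) ^ n) q = Submodule.orthogonalProjectionOnto K ((T ^ n) (q : H)) := by
    rw [tilde_pow hA h1 hK3 hm hM hlo hup hT n (q : H),
      Submodule.orthogonalProjectionOnto_mem_subspace_eq_self q]
  rw [e0]
  have e1 := anorm_proj_lower hA h1 hK3 hm hlo ((T ^ n) (q : H))
  have e2 := opANorm_bound (memBA_pow hA h1 hK3 hm hM hlo hup hT n) (q : H)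
  have e3 := anorm_coe_upper hA h1 hK3 hM hup q
  have e4 : opANorm A (T ^ n) * anorm A (q : H)
      ≤ opANorm A (T ^ n) * (Real.sqrt M * ‖q‖) := mul_le_mul_of_nonneg_left e3 hop
  rw [div_mul_eq_mul_div, div_mul_eq_mul_div, le_div_iff₀ hsm]
  nlinarith [e1, e2, e4]

lemma cmp2 (hA : A.IsPositive) (h1 : ∀ w ∈ Kᗮ, A w = 0) (hK3 : ∀ x : H, A x ∈ K)
    (hm : 0 < m) (hM : 0 < M)
    (hlo : ∀ p : K, m * ‖p‖ ^ 2 ≤ RCLike.re (inner ℂ (A (p : H)) (p : H) : ℂ))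
    (hup : ∀ p : K, RCLike.re (inner ℂ (A (p : H)) (p : H) : ℂ) ≤ M * ‖p‖ ^ 2)
    (hT : MemBA A T) (n : ℕ) :
    opANorm A (T ^ n) ≤ (Real.sqrt M / Real.sqrt m) * ‖(tilde K T) ^ n‖ := by
  have hsm := Real.sqrt_pos.mpr hm
  have hsM := Real.sqrt_pos.mpr hM
  have hnn := norm_nonneg ((tilde K T) ^ n)
  refine opANorm_le (by positivity) (fun x => ?_)
  have e1 := anorm_proj_upper hA h1 hK3 hM hup ((T ^ n) x)
  have e2 : ‖Submodule.orthogonalProjectionOnto K ((T ^ n) x)‖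
      = ‖((tilde K T) ^ n) (Submodule.orthogonalProjectionOnto K x)‖ := by
    rw [tilde_pow hA h1 hK3 hm hM hlo hup hT n x]
  have e3 := ((tilde K T) ^ n).le_opNorm (Submodule.orthogonalProjectionOnto K x)
  have e4 := anorm_proj_lower hA h1 hK3 hm hlo x
  have e5 : anorm A ((T ^ n) x)
      ≤ Real.sqrt M * (‖(tilde K T) ^ n‖ * ‖Submodule.orthogonalProjectionOnto K x‖) := by
    rw [e2] at e1
    exact e1.trans (mul_le_mul_of_nonneg_left e3 hsM.le)
  rw [div_mul_eq_mul_div, div_mul_eq_mul_div, le_div_iff₀ hsm]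
  nlinarith [mul_le_mul_of_nonneg_right e5 hsm.le,
    mul_le_mul_of_nonneg_left e4 (by positivity : (0:ℝ) ≤ Real.sqrt M * ‖(tilde K T) ^ n‖)]

lemma op_submul (hA : A.IsPositive) (h1 : ∀ w ∈ Kᗮ, A w = 0) (hK3 : ∀ x : H, A x ∈ K)
    (hm : 0 < m) (hM : 0 < M)
    (hlo : ∀ p : K, m * ‖p‖ ^ 2 ≤ RCLike.re (inner ℂ (A (p : H)) (p : H) : ℂ))
    (hup : ∀ p : K, RCLike.re (inner ℂ (A (p : H)) (p : H) : ℂ) ≤ M * ‖p‖ ^ 2)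
    (hT : MemBA A T) (n k : ℕ) :
    opANorm A (T ^ (n * k)) ≤ (opANorm A (T ^ n)) ^ k := by
  have hbd : ∀ (k : ℕ) (x : H),
      anorm A ((T ^ (n * k)) x) ≤ (opANorm A (T ^ n)) ^ k * anorm A x := by
    intro k
    induction k with
    | zero => intro x; simp [mul_zero]
    | succ k ih =>
      intro x
      have hsplit : T ^ (n * (k + 1)) = T ^ (n * k) * T ^ n := by
        rw [← pow_add]; ring_nf
      rw [hsplit, ContinuousLinearMap.mul_apply]
      calc anorm A ((T ^ (n * k)) ((T ^ n) x))
          ≤ (opANorm A (T ^ n)) ^ k * anorm A ((T ^ n) x) := ih _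
        _ ≤ (opANorm A (T ^ n)) ^ k * (opANorm A (T ^ n) * anorm A x) :=
            mul_le_mul_of_nonneg_left
              (opANorm_bound (memBA_pow hA h1 hK3 hm hM hlo hup hT n) x)
              (pow_nonneg (opANorm_nonneg A (T ^ n)) k)
        _ = (opANorm A (T ^ n)) ^ (k + 1) * anorm A x := by ring
  exact opANorm_le (pow_nonneg (opANorm_nonneg A (T ^ n)) k) (hbd k)

lemma A_inj_on_K (hm : 0 < m)
    (hlo : ∀ p : K, m * ‖p‖ ^ 2 ≤ RCLike.re (inner ℂ (A (p : H)) (p : H) : ℂ))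
    {a b : K} (hab : A (a : H) = A (b : H)) : a = b := by
  have h0 : A ((a : H) - (b : H)) = 0 := by rw [map_sub, hab, sub_self]
  have h1 := hlo (a - b)
  have h2 : ((a - b : K) : H) = (a : H) - (b : H) := rfl
  rw [h2, h0] at h1
  simp only [inner_zero_left, map_zero] at h1
  have h3 := norm_nonneg (a - b)
  have hsq : ‖a - b‖ ^ 2 ≤ 0 := by nlinarith
  have h4 : ‖a - b‖ = 0 := by nlinarith [sq_nonneg (‖a - b‖)]
  have := norm_eq_zero.mp h4
  exact sub_eq_zero.mp this

end Core2


section Core3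

variable {A T : H →L[ℂ] H} {K : Submodule ℂ H} [CompleteSpace K] {m M : ℝ}

lemma sigmaA_eq_spectrum [Nontrivial K]
    (hA : A.IsPositive) (h1 : ∀ w ∈ Kᗮ, A w = 0) (hK3 : ∀ x : H, A x ∈ K)
    (hm : 0 < m) (hM : 0 < M)
    (hlo : ∀ p : K, m * ‖p‖ ^ 2 ≤ RCLike.re (inner ℂ (A (p : H)) (p : H) : ℂ))
    (hup : ∀ p : K, RCLike.re (inner ℂ (A (p : H)) (p : H) : ℂ) ≤ M * ‖p‖ ^ 2)
    (hT : MemBA A T) :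
    sigmaA A T = spectrum ℂ (tilde K T) := by
  haveI : Nontrivial (K →L[ℂ] K) := by
    refine ⟨0, 1, fun h => ?_⟩
    obtain ⟨q, hq⟩ := exists_ne (0 : K)
    have h2 := ContinuousLinearMap.ext_iff.mp h q
    simp only [ContinuousLinearMap.zero_apply, ContinuousLinearMap.one_apply] at h2
    exact hq h2.symm
  ext lam
  simp only [sigmaA, Set.mem_compl_iff, rhoA, Set.mem_setOf_eq, spectrum.mem_iff]
  rw [not_iff_not]
  have hTT := fun x => proj_comm hA h1 hK3 hm hM hlo hup hT x
  have hproj_lin : ∀ y : H, Submodule.orthogonalProjectionOnto K ((lam • (1 : H →L[ℂ] H) - T) y)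
      = lam • Submodule.orthogonalProjectionOnto K y - Submodule.orthogonalProjectionOnto K (T y) := by
    intro y
    simp only [ContinuousLinearMap.sub_apply, ContinuousLinearMap.smul_apply,
      ContinuousLinearMap.one_apply, map_sub, map_smul]
  have hw : ∀ q : K, (lam • (1 : K →L[ℂ] K) - tilde K T) q
      = Submodule.orthogonalProjectionOnto K ((lam • (1 : H →L[ℂ] H) - T) (q : H)) := by
    intro q
    rw [hproj_lin (q : H), Submodule.orthogonalProjectionOnto_mem_subspace_eq_self q]
    simp only [ContinuousLinearMap.sub_apply, ContinuousLinearMap.smul_apply,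
      ContinuousLinearMap.one_apply, tilde_apply]
  rw [Algebra.algebraMap_eq_smul_one]
  constructor
  · rintro ⟨hne, S, hSne, hSmem, hc1, hc2⟩
    have hST := fun x => proj_comm hA h1 hK3 hm hM hlo hup hSmem x
    have e1 : ∀ q : K, ((lam • (1 : K →L[ℂ] K) - tilde K T) * (tilde K S)) q = q := by
      intro q
      rw [ContinuousLinearMap.mul_apply]
      apply A_inj_on_K hm hlo
      have ht : tilde K T (tilde K S q) = Submodule.orthogonalProjectionOnto K (T (S (q : H))) := by
        rw [tilde_apply S q]
        exact (hTT (S (q : H))).symm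
      have step : (lam • (1 : K →L[ℂ] K) - tilde K T) (tilde K S q)
          = Submodule.orthogonalProjectionOnto K ((lam • (1 : H →L[ℂ] H) - T) (S (q : H))) := by
        rw [hproj_lin (S (q : H))]
        simp only [ContinuousLinearMap.sub_apply, ContinuousLinearMap.smul_apply,
          ContinuousLinearMap.one_apply]
        rw [ht, tilde_apply]
      rw [step, apA_proj h1]
      have h := ContinuousLinearMap.ext_iff.mp hc1 (q : H)
      simpa [ContinuousLinearMap.comp_apply] using h
    have e2 : ∀ q : K, ((tilde K S) * (lam • (1 : K →L[ℂ] K) - tilde K T)) q = q := by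
      intro q
      rw [ContinuousLinearMap.mul_apply]
      apply A_inj_on_K hm hlo
      rw [hw q, ← hST ((lam • (1 : H →L[ℂ] H) - T) (q : H)), apA_proj h1]
      have h := ContinuousLinearMap.ext_iff.mp hc2 (q : H)
      simpa [ContinuousLinearMap.comp_apply] using h
    exact ⟨⟨lam • (1 : K →L[ℂ] K) - tilde K T, tilde K S,
      ContinuousLinearMap.ext fun q => (e1 q).trans rfl,
      ContinuousLinearMap.ext fun q => (e2 q).trans rfl⟩, rfl⟩
  · intro hu
    obtain ⟨u, hu_eq⟩ := hu
    set R : K →L[ℂ] K := ↑u⁻¹ with hRdef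
    have hRel1 : ∀ q : K, (lam • (1 : K →L[ℂ] K) - tilde K T) (R q) = q := by
      intro q
      calc (lam • (1 : K →L[ℂ] K) - tilde K T) (R q)
          = ((lam • (1 : K →L[ℂ] K) - tilde K T) * R) q :=
            (ContinuousLinearMap.mul_apply _ _ _).symm
        _ = ((u : K →L[ℂ] K) * ↑u⁻¹) q := by rw [hu_eq]
        _ = (1 : K →L[ℂ] K) q := by rw [u.mul_inv]
        _ = q := rfl
    have hRel2 : ∀ q : K, R ((lam • (1 : K →L[ℂ] K) - tilde K T) q) = q := by
      intro q
      calc R ((lam • (1 : K →L[ℂ] K) - tilde K T) q)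
          = (R * (lam • (1 : K →L[ℂ] K) - tilde K T)) q :=
            (ContinuousLinearMap.mul_apply _ _ _).symm
        _ = ((↑u⁻¹ : K →L[ℂ] K) * u) q := by rw [hu_eq]
        _ = (1 : K →L[ℂ] K) q := by rw [u.inv_mul]
        _ = q := rfl
    set S : H →L[ℂ] H := K.subtypeL ∘L (R ∘L (Submodule.orthogonalProjectionOnto K : H →L[ℂ] K))
      with hSdef
    have hSapp : ∀ x : H, S x = ((R (Submodule.orthogonalProjectionOnto K x) : K) : H) := by
      intro x
      rw [hSdef]
      rfl
    have hne : lam • (1 : H →L[ℂ] H) - T ≠ 0 := by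
      intro h0
      have hz : lam • (1 : K →L[ℂ] K) - tilde K T = 0 := by
        ext q
        rw [hw q, h0]
        simp
      have : IsUnit (0 : K →L[ℂ] K) := by rw [← hz, ← hu_eq]; exact u.isUnit
      exact not_isUnit_zero this
    have hSne : S ≠ 0 := by
      intro h0
      obtain ⟨q, hq⟩ := exists_ne (0 : K)
      have hv : S (((lam • (1 : K →L[ℂ] K) - tilde K T) q : K) : H) = ((q : K) : H) := by
        rw [hSapp, Submodule.orthogonalProjectionOnto_mem_subspace_eq_self, hRel2 q]
      rw [h0] at hv
      simp only [ContinuousLinearMap.zero_apply] at hv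
      exact hq (by exact_mod_cast hv.symm)
    have hSmem : MemBA A S := by
      refine memBA_of_proj_bound hA h1 hK3 hm hM hlo hup (norm_nonneg R) (fun x => ?_)
      rw [hSapp, Submodule.orthogonalProjectionOnto_mem_subspace_eq_self]
      exact R.le_opNorm _
    have key1 : ∀ x : H, A ((lam • (1 : H →L[ℂ] H) - T) (S x)) = A x := by
      intro x
      rw [hSapp]
      rw [← apA_proj (K := K) h1
        ((lam • (1 : H →L[ℂ] H) - T) ((R (Submodule.orthogonalProjectionOnto K x) : K) : H)),
        ← hw (R (Submodule.orthogonalProjectionOnto K x)), hRel1 (Submodule.orthogonalProjectionOnto K x)]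
      exact apA_proj h1 x
    have key2 : ∀ x : H, A (S ((lam • (1 : H →L[ℂ] H) - T) x)) = A x := by
      intro x
      rw [hSapp]
      have hpx : Submodule.orthogonalProjectionOnto K ((lam • (1 : H →L[ℂ] H) - T) x)
          = (lam • (1 : K →L[ℂ] K) - tilde K T) (Submodule.orthogonalProjectionOnto K x) := by
        rw [hproj_lin x, hTT x]
        simp only [ContinuousLinearMap.sub_apply, ContinuousLinearMap.smul_apply,
          ContinuousLinearMap.one_apply]
      rw [hpx, hRel2, apA_proj h1]
    refine ⟨hne, S, hSne, hSmem, ?_, ?_⟩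
    · ext x
      simpa [ContinuousLinearMap.comp_apply] using key1 x
    · ext x
      simpa [ContinuousLinearMap.comp_apply] using key2 x

end Core3


section Core4

open Filter

variable {A T : H →L[ℂ] H} {K : Submodule ℂ H} [CompleteSpace K] {m M : ℝ}

set_option maxHeartbeats 1000000 in
lemma rA_eq_spectralRadius [Nontrivial K]
    (hA : A.IsPositive) (h1 : ∀ w ∈ Kᗮ, A w = 0) (hK3 : ∀ x : H, A x ∈ K)
    (hm : 0 < m) (hM : 0 < M)
    (hlo : ∀ p : K, m * ‖p‖ ^ 2 ≤ RCLike.re (inner ℂ (A (p : H)) (p : H) : ℂ))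
    (hup : ∀ p : K, RCLike.re (inner ℂ (A (p : H)) (p : H) : ℂ) ≤ M * ‖p‖ ^ 2)
    (hT : MemBA A T) :
    rA A T = (spectralRadius ℂ (tilde K T)).toReal := by
  haveI : Nontrivial (K →L[ℂ] K) := by
    refine ⟨0, 1, fun h => ?_⟩
    obtain ⟨q, hq⟩ := exists_ne (0 : K)
    have h2 := ContinuousLinearMap.ext_iff.mp h q
    simp only [ContinuousLinearMap.zero_apply, ContinuousLinearMap.one_apply] at h2
    exact hq h2.symm
  have hfin : spectralRadius ℂ (tilde K T) ≠ ⊤ := by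
    have hb := spectrum.spectralRadius_le_nnnorm (𝕜 := ℂ) (tilde K T)
    exact ne_top_of_le_ne_top ENNReal.coe_ne_top hb
  have gelf : Tendsto (fun k : ℕ => ‖(tilde K T) ^ k‖ ^ (1 / (k : ℝ))) atTop
      (nhds (spectralRadius ℂ (tilde K T)).toReal) := by
    have h := spectrum.pow_norm_pow_one_div_tendsto_nhds_spectralRadius (tilde K T)
    have h2 := (ENNReal.tendsto_toReal hfin).comp h
    refine h2.congr (fun k => ENNReal.toReal_ofReal ?_)
    positivity
  have hsm := Real.sqrt_pos.mpr hm
  have hsM := Real.sqrt_pos.mpr hM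
  set CC : ℝ := Real.sqrt M / Real.sqrt m with hCCdef
  have hCC : 0 < CC := div_pos hsM hsm
  have hCpow : Tendsto (fun k : ℕ => CC ^ (1 / (k : ℝ))) atTop (nhds 1) := by
    have hc := Real.continuousAt_const_rpow (a := CC) (b := 0) hCC.ne'
    have h0 := tendsto_one_div_atTop_nhds_zero_nat (𝕜 := ℝ)
    have h2 := hc.tendsto.comp h0
    simp only [Function.comp_def] at h2
    simpa [Real.rpow_zero] using h2
  set r := (spectralRadius ℂ (tilde K T)).toReal with hrdef
  have claimA : ∀ n : ℕ+, r ≤ (opANorm A (T ^ (n : ℕ))) ^ ((((n : ℕ) : ℝ))⁻¹) := by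
    intro n
    have hn : 0 < (n : ℕ) := n.2
    have hop : 0 ≤ opANorm A (T ^ (n : ℕ)) := opANorm_nonneg A _
    have hmul : Tendsto (fun k : ℕ => (n : ℕ) * k) atTop atTop :=
      Filter.tendsto_atTop_atTop_of_monotone
        (fun a b h => Nat.mul_le_mul_left _ h)
        (fun b => ⟨b, Nat.le_mul_of_pos_left b hn⟩)
    have tend1 := gelf.comp hmul
    simp only [Function.comp_def] at tend1
    have tendC := hCpow.comp hmul
    simp only [Function.comp_def] at tendC
    have tend2 := tendC.mul_const ((opANorm A (T ^ (n : ℕ))) ^ ((((n : ℕ) : ℝ))⁻¹))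
    rw [one_mul] at tend2
    refine le_of_tendsto_of_tendsto tend1 tend2 ?_
    filter_upwards [Filter.eventually_ge_atTop 1] with k hk
    have hk0 : 0 < k := hk
    have hN : 0 < (n : ℕ) * k := Nat.mul_pos hn hk0
    have b1 : ‖(tilde K T) ^ ((n : ℕ) * k)‖ ≤ CC * (opANorm A (T ^ (n : ℕ))) ^ k :=
      (cmp1 hA h1 hK3 hm hM hlo hup hT ((n : ℕ) * k)).trans
        (mul_le_mul_of_nonneg_left (op_submul hA h1 hK3 hm hM hlo hup hT n k) hCC.le)
    have b2 : ‖(tilde K T) ^ ((n : ℕ) * k)‖ ^ (1 / ((((n : ℕ) * k : ℕ)) : ℝ))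
        ≤ (CC * (opANorm A (T ^ (n : ℕ))) ^ k) ^ (1 / ((((n : ℕ) * k : ℕ)) : ℝ)) :=
      Real.rpow_le_rpow (ContinuousLinearMap.opNorm_nonneg _) b1 (by positivity)
    have b3 : (CC * (opANorm A (T ^ (n : ℕ))) ^ k) ^ (1 / ((((n : ℕ) * k : ℕ)) : ℝ))
        = CC ^ (1 / ((((n : ℕ) * k : ℕ)) : ℝ))
          * ((opANorm A (T ^ (n : ℕ))) ^ k) ^ (1 / ((((n : ℕ) * k : ℕ)) : ℝ)) :=
      Real.mul_rpow hCC.le (pow_nonneg hop k)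
    have b4 : ((opANorm A (T ^ (n : ℕ))) ^ k) ^ (1 / ((((n : ℕ) * k : ℕ)) : ℝ))
        = (opANorm A (T ^ (n : ℕ))) ^ ((((n : ℕ) : ℝ))⁻¹) := by
      rw [← Real.rpow_natCast (opANorm A (T ^ (n : ℕ))) k, ← Real.rpow_mul hop]
      congr 1
      have hkr : ((k : ℝ)) ≠ 0 := Nat.cast_ne_zero.mpr hk0.ne'
      have hnr : (((n : ℕ) : ℝ)) ≠ 0 := Nat.cast_ne_zero.mpr hn.ne'
      push_cast
      field_simp
    calc ‖(tilde K T) ^ ((n : ℕ) * k)‖ ^ (1 / ((((n : ℕ) * k : ℕ)) : ℝ))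
        ≤ (CC * (opANorm A (T ^ (n : ℕ))) ^ k) ^ (1 / ((((n : ℕ) * k : ℕ)) : ℝ)) := b2
      _ = CC ^ (1 / ((((n : ℕ) * k : ℕ)) : ℝ))
          * (opANorm A (T ^ (n : ℕ))) ^ ((((n : ℕ) : ℝ))⁻¹) := by rw [b3, b4]
  have hrange_bdd : BddBelow (Set.range fun n : ℕ+ =>
      (opANorm A (T ^ (n : ℕ))) ^ ((((n : ℕ) : ℝ))⁻¹)) := by
    refine ⟨0, fun y hy => ?_⟩
    obtain ⟨n, rfl⟩ := hy
    exact Real.rpow_nonneg (opANorm_nonneg A _) _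
  have claimB : (⨅ n : ℕ+, (opANorm A (T ^ (n : ℕ))) ^ ((((n : ℕ) : ℝ))⁻¹)) ≤ r := by
    have key : ∀ k : ℕ, 1 ≤ k →
        (⨅ n : ℕ+, (opANorm A (T ^ (n : ℕ))) ^ ((((n : ℕ) : ℝ))⁻¹))
          ≤ CC ^ (1 / (k : ℝ)) * ‖(tilde K T) ^ k‖ ^ (1 / (k : ℝ)) := by
      intro k hk
      have hk0 : 0 < k := hk
      have step1 : (⨅ n : ℕ+, (opANorm A (T ^ (n : ℕ))) ^ ((((n : ℕ) : ℝ))⁻¹))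
          ≤ (opANorm A (T ^ k)) ^ (((k : ℕ) : ℝ))⁻¹ := by
        have h := ciInf_le hrange_bdd (⟨k, hk0⟩ : ℕ+)
        simpa using h
      calc (⨅ n : ℕ+, (opANorm A (T ^ (n : ℕ))) ^ ((((n : ℕ) : ℝ))⁻¹))
          ≤ (opANorm A (T ^ k)) ^ (((k : ℕ) : ℝ))⁻¹ := step1
        _ ≤ (CC * ‖(tilde K T) ^ k‖) ^ (((k : ℕ) : ℝ))⁻¹ :=
            Real.rpow_le_rpow (opANorm_nonneg A _)
              (cmp2 hA h1 hK3 hm hM hlo hup hT k) (by positivity)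
        _ = CC ^ (((k : ℕ) : ℝ))⁻¹ * ‖(tilde K T) ^ k‖ ^ (((k : ℕ) : ℝ))⁻¹ :=
            Real.mul_rpow hCC.le (ContinuousLinearMap.opNorm_nonneg _)
        _ = CC ^ (1 / (k : ℝ)) * ‖(tilde K T) ^ k‖ ^ (1 / (k : ℝ)) := by
            rw [one_div]
    have tendB : Tendsto (fun k : ℕ => CC ^ (1 / (k : ℝ)) * ‖(tilde K T) ^ k‖ ^ (1 / (k : ℝ)))
        atTop (nhds (1 * r)) := hCpow.mul gelf
    rw [one_mul] at tendB
    exact ge_of_tendsto tendB (Filter.eventually_atTop.mpr ⟨1, fun k hk => key k hk⟩)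
  have : rA A T = ⨅ n : ℕ+, (opANorm A (T ^ (n : ℕ))) ^ ((((n : ℕ) : ℝ))⁻¹) := rfl
  rw [this]
  exact le_antisymm claimB (le_ciInf claimA)

set_option maxHeartbeats 1000000 in
lemma supSpecA_eq [Nontrivial K]
    (hA : A.IsPositive) (h1 : ∀ w ∈ Kᗮ, A w = 0) (hK3 : ∀ x : H, A x ∈ K)
    (hm : 0 < m) (hM : 0 < M)
    (hlo : ∀ p : K, m * ‖p‖ ^ 2 ≤ RCLike.re (inner ℂ (A (p : H)) (p : H) : ℂ))
    (hup : ∀ p : K, RCLike.re (inner ℂ (A (p : H)) (p : H) : ℂ) ≤ M * ‖p‖ ^ 2)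
    (hT : MemBA A T) :
    supSpecA A T = (spectralRadius ℂ (tilde K T)).toReal := by
  haveI : Nontrivial (K →L[ℂ] K) := by
    refine ⟨0, 1, fun h => ?_⟩
    obtain ⟨q, hq⟩ := exists_ne (0 : K)
    have h2 := ContinuousLinearMap.ext_iff.mp h q
    simp only [ContinuousLinearMap.zero_apply, ContinuousLinearMap.one_apply] at h2
    exact hq h2.symm
  obtain ⟨z, hz_mem, hz⟩ := spectrum.exists_nnnorm_eq_spectralRadius (tilde K T)
  have hzr : ‖z‖ = (spectralRadius ℂ (tilde K T)).toReal := by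
    rw [← hz]
    simp
  have hbound : ∀ w ∈ spectrum ℂ (tilde K T), ‖w‖ ≤ ‖z‖ := by
    intro w hw
    have hle : (‖w‖₊ : ENNReal) ≤ spectralRadius ℂ (tilde K T) :=
      le_iSup₂ (f := fun k (_ : k ∈ spectrum ℂ (tilde K T)) => (‖k‖₊ : ENNReal)) w hw
    rw [← hz] at hle
    have := ENNReal.coe_le_coe.mp hle
    exact_mod_cast this
  have hsig : sigmaA A T = spectrum ℂ (tilde K T) :=
    sigmaA_eq_spectrum hA h1 hK3 hm hM hlo hup hT
  have hss : supSpecA A T = sSup ((fun z : ℂ => ‖z‖) '' spectrum ℂ (tilde K T)) := by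
    rw [supSpecA, hsig]
  rw [hss, ← hzr]
  apply le_antisymm
  · refine csSup_le ⟨‖z‖, ⟨z, hz_mem, rfl⟩⟩ ?_
    rintro b ⟨w, hw, rfl⟩
    exact hbound w hw
  · refine le_csSup ⟨‖z‖, ?_⟩ ⟨z, hz_mem, rfl⟩
    rintro b ⟨w, hw, rfl⟩
    exact hbound w hw

end Core4


section RangeA

variable {A : H →L[ℂ] H}

lemma range_orth_killed (hA : A.IsPositive) :
    ∀ w ∈ (LinearMap.range (A : H →ₗ[ℂ] H) : Submodule ℂ H)ᗮ, A w = 0 := by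
  intro w hw
  have h0 : (inner ℂ (A w) w : ℂ) = 0 :=
    Submodule.inner_right_of_mem_orthogonal (K := (LinearMap.range (A : H →ₗ[ℂ] H) : Submodule ℂ H))
      ⟨w, rfl⟩ hw
  have h1 := norm_apply_sq_le hA w
  rw [h0] at h1
  simp only [map_zero, mul_zero] at h1
  have h2 := norm_nonneg (A w)
  have h3 : ‖A w‖ = 0 := by nlinarith
  exact norm_eq_zero.mp h3

lemma norm_A_pos (hA0 : A ≠ 0) : 0 < ‖A‖ := by
  rcases (norm_nonneg A).lt_or_eq with h | h
  · exact h
  · exact absurd ((ContinuousLinearMap.opNorm_zero_iff A).mp h.symm) hA0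

lemma re_inner_le_opNorm (x : H) :
    RCLike.re (inner ℂ (A x) x : ℂ) ≤ ‖A‖ * ‖x‖ ^ 2 := by
  have h1 : RCLike.re (inner ℂ (A x) x : ℂ) ≤ ‖(inner ℂ (A x) x : ℂ)‖ := RCLike.re_le_norm _
  have h2 : ‖(inner ℂ (A x) x : ℂ)‖ ≤ ‖A x‖ * ‖x‖ := norm_inner_le_norm _ _
  have h3 : ‖A x‖ ≤ ‖A‖ * ‖x‖ := A.le_opNorm x
  nlinarith [norm_nonneg x, norm_nonneg (A x), norm_nonneg A]

set_option maxHeartbeats 1000000 in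
lemma exists_lower_bound (hA : A.IsPositive) (hA0 : A ≠ 0)
    (hclosed : IsClosed (Set.range (⇑A))) :
    ∃ m : ℝ, 0 < m ∧ ∀ p : (LinearMap.range (A : H →ₗ[ℂ] H) : Submodule ℂ H),
      m * ‖p‖ ^ 2 ≤ RCLike.re (inner ℂ (A (p : H)) (p : H) : ℂ) := by
  have hKclosed : IsClosed ((LinearMap.range (A : H →ₗ[ℂ] H) : Submodule ℂ H) : Set H) := by
    have he : ((LinearMap.range (A : H →ₗ[ℂ] H) : Submodule ℂ H) : Set H) = Set.range (⇑A) := by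
      ext z
      simp [LinearMap.mem_range, Set.mem_range]
    rw [he]
    exact hclosed
  haveI : CompleteSpace (LinearMap.range (A : H →ₗ[ℂ] H) : Submodule ℂ H) := hKclosed.completeSpace_coe
  set K : Submodule ℂ H := LinearMap.range (A : H →ₗ[ℂ] H)
  have hK3 : ∀ x : H, A x ∈ K := fun x => ⟨x, rfl⟩
  have h1 : ∀ w ∈ Kᗮ, A w = 0 := range_orth_killed hA
  set B : K →L[ℂ] K := Submodule.orthogonalProjectionOnto K ∘L (A ∘L K.subtypeL) with hBdef
  have hBapply : ∀ p : K, ((B p : K) : H) = A (p : H) := by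
    intro p
    have h2 : B p = Submodule.orthogonalProjectionOnto K (A (p : H)) := rfl
    rw [h2]
    exact congrArg Subtype.val
      (Submodule.orthogonalProjectionOnto_mem_subspace_eq_self (⟨A (p : H), hK3 (p : H)⟩ : K))
  have hBinj : LinearMap.ker (B : K →ₗ[ℂ] K) = ⊥ := by
    rw [LinearMap.ker_eq_bot']
    intro p hp
    change B p = 0 at hp
    obtain ⟨z, hz⟩ := p.2
    have hz' : A z = (p : H) := hz
    have hp1 : A (p : H) = 0 := by
      have h := hBapply p
      rw [hp] at h
      simpa using h.symm
    have h2 : (inner ℂ (A z) (A z) : ℂ) = 0 := by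
      have h4 : A (A z) = 0 := by rw [hz']; exact hp1
      calc (inner ℂ (A z) (A z) : ℂ) = inner ℂ z (A (A z)) := posop_inner_symm hA z (A z)
        _ = 0 := by rw [h4, inner_zero_right]
    have h3 : A z = 0 := inner_self_eq_zero.mp h2
    apply Subtype.ext
    show (p : H) = 0
    rw [← hz']
    exact h3
  have hBsurj : LinearMap.range (B : K →ₗ[ℂ] K) = ⊤ := by
    rw [LinearMap.range_eq_top]
    intro q
    obtain ⟨z, hz⟩ := q.2
    have hz' : A z = (q : H) := hz
    refine ⟨Submodule.orthogonalProjectionOnto K z, Subtype.ext ?_⟩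
    show ((B (Submodule.orthogonalProjectionOnto K z) : K) : H) = q
    rw [hBapply (Submodule.orthogonalProjectionOnto K z), apA_proj h1 z]
    exact hz'
  set e := ContinuousLinearEquiv.ofBijective B hBinj hBsurj with hedef
  have hlow : ∀ p : K, ‖p‖ ≤ (‖(e.symm : K →L[ℂ] K)‖ + 1) * ‖A (p : H)‖ := by
    intro p
    have h2 : e p = B p := by
      rw [hedef]
      exact congrFun (ContinuousLinearEquiv.coeFn_ofBijective B hBinj hBsurj) p
    have h3 : ‖p‖ ≤ ‖(e.symm : K →L[ℂ] K)‖ * ‖B p‖ := by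
      calc ‖p‖ = ‖e.symm (e p)‖ := by rw [e.symm_apply_apply]
        _ = ‖(e.symm : K →L[ℂ] K) (e p)‖ := rfl
        _ ≤ ‖(e.symm : K →L[ℂ] K)‖ * ‖e p‖ := (e.symm : K →L[ℂ] K).le_opNorm _
        _ = ‖(e.symm : K →L[ℂ] K)‖ * ‖B p‖ := by rw [h2]
    have h4 : ‖B p‖ = ‖A (p : H)‖ := by
      rw [← hBapply p]
      rfl
    rw [h4] at h3
    have h5 := norm_nonneg (A (p : H))
    nlinarith [norm_nonneg (e.symm : K →L[ℂ] K)]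
  set c : ℝ := ‖(e.symm : K →L[ℂ] K)‖ + 1 with hcdef
  have hc0 : 0 < c := by positivity
  have hM := norm_A_pos hA0
  refine ⟨(c ^ 2 * ‖A‖)⁻¹, by positivity, fun p => ?_⟩
  have h2 := norm_apply_sq_le hA (p : H)
  have h3 := hlow p
  have h4 : 0 ≤ RCLike.re (inner ℂ (A (p : H)) (p : H) : ℂ) := hA.2 _
  have h5 : ‖(p : H)‖ = ‖p‖ := rfl
  have h6 : ‖p‖ ^ 2 ≤ c ^ 2 * ‖A (p : H)‖ ^ 2 := by
    have h7 := pow_le_pow_left₀ (norm_nonneg p) h3 2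
    calc ‖p‖ ^ 2 ≤ (c * ‖A (p : H)‖) ^ 2 := h7
      _ = c ^ 2 * ‖A (p : H)‖ ^ 2 := by ring
  have key : ‖p‖ ^ 2 ≤ (c ^ 2 * ‖A‖) * RCLike.re (inner ℂ (A (p : H)) (p : H) : ℂ) := by
    nlinarith [sq_nonneg c]
  calc (c ^ 2 * ‖A‖)⁻¹ * ‖p‖ ^ 2
      ≤ (c ^ 2 * ‖A‖)⁻¹ * ((c ^ 2 * ‖A‖) * RCLike.re (inner ℂ (A (p : H)) (p : H) : ℂ)) := by
        have : (0:ℝ) ≤ (c ^ 2 * ‖A‖)⁻¹ := by positivity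
        exact mul_le_mul_of_nonneg_left key this
    _ = RCLike.re (inner ℂ (A (p : H)) (p : H) : ℂ) := by
        field_simp

end RangeA



end Stmt1Aux

theorem stmt1 (A T : H →L[ℂ] H) (hA : A.IsPositive) (hA0 : A ≠ 0)
    (hT : MemBA A T) (hclosed : IsClosed (Set.range (⇑A))) :
    supSpecA A T = rA A T := by
  have hKclosed : IsClosed ((LinearMap.range (A : H →ₗ[ℂ] H) : Submodule ℂ H) : Set H) := by
    have he : ((LinearMap.range (A : H →ₗ[ℂ] H) : Submodule ℂ H) : Set H) = Set.range (⇑A) := by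
      ext z
      simp [LinearMap.mem_range, Set.mem_range]
    rw [he]
    exact hclosed
  haveI : CompleteSpace (LinearMap.range (A : H →ₗ[ℂ] H) : Submodule ℂ H) := hKclosed.completeSpace_coe
  haveI : Nontrivial (LinearMap.range (A : H →ₗ[ℂ] H) : Submodule ℂ H) := by
    obtain ⟨x0, hx0⟩ : ∃ x0 : H, A x0 ≠ 0 := by
      by_contra h
      push_neg at h
      exact hA0 (ContinuousLinearMap.ext fun x => by simp [h x])
    exact ⟨⟨A x0, ⟨x0, rfl⟩⟩, 0, by simp [Subtype.ext_iff, hx0]⟩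
  obtain ⟨m, hm, hlo⟩ := Stmt1Aux.exists_lower_bound hA hA0 hclosed
  have hM := Stmt1Aux.norm_A_pos hA0
  have hup : ∀ p : (LinearMap.range (A : H →ₗ[ℂ] H) : Submodule ℂ H),
      RCLike.re (inner ℂ (A (p : H)) (p : H) : ℂ) ≤ ‖A‖ * ‖p‖ ^ 2 := by
    intro p
    have h := Stmt1Aux.re_inner_le_opNorm (A := A) ((p : H))
    have h5 : ‖(p : H)‖ = ‖p‖ := rfl
    rw [h5] at h
    exact h
  have h1 := Stmt1Aux.range_orth_killed hA
  have hK3 : ∀ x : H, A x ∈ (LinearMap.range (A : H →ₗ[ℂ] H) : Submodule ℂ H) := fun x => ⟨x, rfl⟩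
  rw [Stmt1Aux.supSpecA_eq hA h1 hK3 hm hM hlo hup hT,
    Stmt1Aux.rA_eq_spectralRadius hA h1 hK3 hm hM hlo hup hT]
end

section
/- Let T ∈ B_{A^{1/2}}(H) and let S be a bounded operator on H which is the A^{1/2}-adjoint T^⋄ of T; since the closure of the range of A^{1/2} equals the closure of the range of A, S restricts to a bounded operator S₀ on the Hilbert space cl R(A). If λ ∈ ρ_A(T), then the complex conjugate of λ lies in the resolvent set of S₀, i.e., conj(λ)·I − S₀ is invertible in the bounded operators on cl R(A). -/
variable {H : Type*} [NormedAddCommGroup H] [InnerProductSpace ℂ H] [CompleteSpace H]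

theorem stmt3 (A sqrtA T S : H →L[ℂ] H) (hA : A.IsPositive) (hA0 : A ≠ 0)
    (hsqrt : sqrtA.IsPositive) (hsq : sqrtA.comp sqrtA = A)
    (hT : MemBA A T) (hS : IsDiamond sqrtA T S)
    (S₀ : ((LinearMap.range (A : H →ₗ[ℂ] H)).topologicalClosure : Submodule ℂ H) →L[ℂ]
      ((LinearMap.range (A : H →ₗ[ℂ] H)).topologicalClosure : Submodule ℂ H))
    (hS₀ : ∀ x : ((LinearMap.range (A : H →ₗ[ℂ] H)).topologicalClosure : Submodule ℂ H), (S₀ x : H) = S x)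
    (lam : ℂ) (hlam : lam ∈ rhoA A T) :
    (starRingEnd ℂ) lam ∉ spectrum ℂ S₀ := by
  classical
  obtain ⟨hne, R, hR0, ⟨cR, hcR, hRbd⟩, hLR, hRL⟩ := hlam
  set L : H →L[ℂ] H := lam • (1 : H →L[ℂ] H) - T with hLdef
  haveI hMc : CompleteSpace ((LinearMap.range (A : H →ₗ[ℂ] H)).topologicalClosure : Submodule ℂ H) :=
    (Submodule.isClosed_topologicalClosure _).completeSpace_coe
  -- sqrtA is self-adjoint
  have hsa : ∀ x y : H, (inner ℂ (sqrtA x) y : ℂ) = inner ℂ x (sqrtA y) := by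
    intro x y
    conv_lhs => rw [← hsqrt.isSelfAdjoint.adjoint_eq]
    rw [ContinuousLinearMap.adjoint_inner_left]
  have hAx : ∀ x, A x = sqrtA (sqrtA x) := by
    intro x; rw [← hsq]; rfl
  have hker : ∀ x, A x = 0 → sqrtA x = 0 := by
    intro x hx
    have h0 : (inner ℂ (sqrtA x) (sqrtA x) : ℂ) = 0 := by
      rw [hsa, ← hAx, hx, inner_zero_right]
    exact inner_self_eq_zero.mp h0
  -- range of sqrtA lies in M
  have hmemsq : ∀ x, sqrtA x ∈ (LinearMap.range (A : H →ₗ[ℂ] H)).topologicalClosure := by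
    intro x
    rw [← Submodule.orthogonal_orthogonal (LinearMap.range (A : H →ₗ[ℂ] H)).topologicalClosure,
      Submodule.mem_orthogonal]
    intro v hv
    rw [Submodule.mem_orthogonal] at hv
    have hAv : A v ∈ (LinearMap.range (A : H →ₗ[ℂ] H)).topologicalClosure :=
      Submodule.le_topologicalClosure _ ⟨v, rfl⟩
    have h0 : (inner ℂ (A v) v : ℂ) = 0 := hv (A v) hAv
    have hsv : sqrtA v = 0 := by
      have h1 : (inner ℂ (sqrtA v) (sqrtA v) : ℂ) = 0 := by
        rw [← hsa, ← hAx]; exact h0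
      exact inner_self_eq_zero.mp h1
    rw [← hsa, hsv, inner_zero_left]
  -- the map j : H → M
  set j : H → ((LinearMap.range (A : H →ₗ[ℂ] H)).topologicalClosure : Submodule ℂ H) :=
    fun x => ⟨sqrtA x, hmemsq x⟩ with hjdef
  -- anorm is the norm of sqrtA
  have hanorm : ∀ x, anorm A x = ‖sqrtA x‖ := by
    intro x
    rw [anorm, hAx, hsa, inner_self_eq_norm_sq, Real.sqrt_sq (norm_nonneg _)]
  -- the two resolvent identities at the sqrtA level
  have hLRx : ∀ x, sqrtA (L (R x)) = sqrtA x := by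
    intro x
    have h1 : A (L (R x)) = A x := by
      have := congrArg (fun (f : H →L[ℂ] H) => f x) hLR
      simpa using this
    have h3 := hker _ (by rw [map_sub, h1, sub_self] : A (L (R x) - x) = 0)
    rw [map_sub, sub_eq_zero] at h3
    exact h3
  have hRLx : ∀ x, sqrtA (R (L x)) = sqrtA x := by
    intro x
    have h1 : A (R (L x)) = A x := by
      have := congrArg (fun (f : H →L[ℂ] H) => f x) hRL
      simpa using this
    have h3 := hker _ (by rw [map_sub, h1, sub_self] : A (R (L x) - x) = 0)
    rw [map_sub, sub_eq_zero] at h3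
    exact h3
  -- every element of M is a limit of j's
  have happrox : ∀ m : ((LinearMap.range (A : H →ₗ[ℂ] H)).topologicalClosure : Submodule ℂ H),
      ∃ u : ℕ → H, Filter.Tendsto (fun n => j (u n)) Filter.atTop (nhds m) := by
    intro m
    have hmc : (m : H) ∈ closure (Set.range (⇑sqrtA)) := by
      have h1 : (m : H) ∈ closure ((LinearMap.range (A : H →ₗ[ℂ] H) : Submodule ℂ H) : Set H) := by
        rw [← Submodule.topologicalClosure_coe]; exact m.2
      refine closure_mono ?_ h1
      rintro y ⟨z, rfl⟩
      exact ⟨sqrtA z, (hAx z).symm⟩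
    rw [mem_closure_iff_seq_limit] at hmc
    obtain ⟨f, hf1, hf2⟩ := hmc
    choose u hu using hf1
    refine ⟨u, ?_⟩
    rw [tendsto_subtype_rng]
    exact Filter.Tendsto.congr (fun n => (hu n).symm) hf2
  -- the adjoint of S₀ intertwines with T via j
  set D := ContinuousLinearMap.adjoint S₀ with hDdef
  have hD : ∀ z : H, D (j z) = j (T z) := by
    intro z
    refine ext_inner_right ℂ fun u => ?_
    rw [hDdef, ContinuousLinearMap.adjoint_inner_left]
    rw [Submodule.coe_inner, Submodule.coe_inner, hS₀]
    have h1 : sqrtA (S (u : H)) = (ContinuousLinearMap.adjoint T) (sqrtA (u : H)) := by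
      have := congrArg (fun (f : H →L[ℂ] H) => f (u : H)) hS.1
      simpa using this
    show (inner ℂ (sqrtA z) (S (u : H)) : ℂ) = inner ℂ (sqrtA (T z)) (u : H)
    rw [hsa, h1, ContinuousLinearMap.adjoint_inner_right, ← hsa]
  -- the operator C = lam • 1 - D on M
  set C := lam • (1 : ((LinearMap.range (A : H →ₗ[ℂ] H)).topologicalClosure : Submodule ℂ H) →L[ℂ]
      ((LinearMap.range (A : H →ₗ[ℂ] H)).topologicalClosure : Submodule ℂ H)) - D with hCdef
  have hCj : ∀ z : H, C (j z) = j (L z) := by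
    intro z
    apply Subtype.ext
    have h2 : C (j z) = lam • j z - D (j z) := by rw [hCdef]; rfl
    rw [h2, hD z]
    show lam • sqrtA z - sqrtA (T z) = sqrtA (L z)
    have h3 : L z = lam • z - T z := by rw [hLdef]; simp
    rw [h3, map_sub, map_smul]
  -- C is antilipschitz
  have hbd : ∀ m, ‖m‖ ≤ cR * ‖C m‖ := by
    have hbase : ∀ z : H, ‖j z‖ ≤ cR * ‖C (j z)‖ := by
      intro z
      rw [hCj]
      have h1 : ‖j z‖ = ‖sqrtA z‖ := rfl
      have h2 : ‖j (L z)‖ = ‖sqrtA (L z)‖ := rfl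
      rw [h1, h2, ← hRLx z, ← hanorm, ← hanorm]
      exact hRbd (L z)
    intro m
    obtain ⟨u, hu⟩ := happrox m
    have hnorm1 : Filter.Tendsto (fun n => ‖j (u n)‖) Filter.atTop (nhds ‖m‖) :=
      (continuous_norm.tendsto _).comp hu
    have hnorm2 : Filter.Tendsto (fun n => cR * ‖C (j (u n))‖) Filter.atTop
        (nhds (cR * ‖C m‖)) :=
      Filter.Tendsto.const_mul _
        ((continuous_norm.tendsto _).comp ((C.continuous.tendsto _).comp hu))
    exact le_of_tendsto_of_tendsto' hnorm1 hnorm2 fun n => hbase (u n)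
  have hanti : AntilipschitzWith ⟨cR, hcR.le⟩ C := C.antilipschitz_of_bound hbd
  -- C has dense range
  have hjrange : ∀ x : H, j x ∈ (LinearMap.range (C : ((LinearMap.range (A : H →ₗ[ℂ] H)).topologicalClosure : Submodule ℂ H) →ₗ[ℂ] ((LinearMap.range (A : H →ₗ[ℂ] H)).topologicalClosure : Submodule ℂ H)) : Set _) := by
    intro x
    refine ⟨j (R x), ?_⟩
    rw [ContinuousLinearMap.coe_coe, hCj]
    exact Subtype.ext (hLRx x)
  have hdense : (LinearMap.range (C : ((LinearMap.range (A : H →ₗ[ℂ] H)).topologicalClosure : Submodule ℂ H) →ₗ[ℂ] ((LinearMap.range (A : H →ₗ[ℂ] H)).topologicalClosure : Submodule ℂ H))).topologicalClosure = ⊤ := by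
    rw [← Submodule.dense_iff_topologicalClosure_eq_top]
    intro m
    obtain ⟨u, hu⟩ := happrox m
    exact mem_closure_of_tendsto hu
      (Filter.Eventually.of_forall fun n => hjrange (u n))
  -- C is bijective, hence a unit
  have hbij : Function.Bijective C :=
    (C.bijective_iff_dense_range_and_antilipschitz).mpr ⟨hdense, ⟨_, hanti⟩⟩
  have hunit : IsUnit C := ContinuousLinearMap.isUnit_iff_bijective.mpr hbij
  have hstarunit : IsUnit (star C) := hunit.star
  have hstarC : star C = (starRingEnd ℂ) lam • (1 : ((LinearMap.range (A : H →ₗ[ℂ] H)).topologicalClosure :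
      Submodule ℂ H) →L[ℂ] ((LinearMap.range (A : H →ₗ[ℂ] H)).topologicalClosure : Submodule ℂ H)) - S₀ := by
    rw [hCdef, hDdef, ContinuousLinearMap.star_eq_adjoint, map_sub, map_smulₛₗ,
      ContinuousLinearMap.adjoint_adjoint]
    congr 1
    simp only [ContinuousLinearMap.one_def, ContinuousLinearMap.adjoint_id]
  rw [spectrum.notMem_iff, Algebra.algebraMap_eq_smul_one, ← hstarC]
  exact hstarunit
end

section
/- Let T ∈ B_{A^{1/2}}(H) and let S ∈ B_{A^{1/2}}(H) be the A^{1/2}-adjoint T^⋄ of T. Let T_eff denote the restriction of PTP to the Hilbert space cl R(A) (this subspace is invariant under PTP). Then the spectral radius of T_eff equals r_A(S), and r_A(S) ≤ sup{|λ| : λ ∈ σ_A(T)}. -/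
variable {H : Type*} [NormedAddCommGroup H] [InnerProductSpace ℂ H] [CompleteSpace H]

lemma ofReal_norm_rpow {X : Type*} [SeminormedAddGroup X] (x : X) (r : ℝ) (hr : 0 ≤ r) :
    ENNReal.ofReal (‖x‖ ^ r) = (‖x‖₊ : ENNReal) ^ r := by
  rw [← ENNReal.ofReal_rpow_of_nonneg (norm_nonneg _) hr, ofReal_norm, enorm_eq_nnnorm]

section Aux

open Filter ENNReal in
lemma sr_eq_iInf' {B : Type*} [NormedRing B] [NormedAlgebra ℂ B] [CompleteSpace B] [NormOneClass B]
    (a : B) :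
    spectralRadius ℂ a = ⨅ n : ℕ+, (‖a ^ (n : ℕ)‖₊ : ℝ≥0∞) ^ ((((n : ℕ) : ℝ))⁻¹) := by
  apply le_antisymm
  · refine le_iInf fun n => ?_
    obtain ⟨m, hm⟩ : ∃ m : ℕ, (n : ℕ) = m + 1 := ⟨(n : ℕ) - 1, (Nat.succ_pred_eq_of_pos n.2).symm⟩
    have := spectrum.spectralRadius_le_pow_nnnorm_pow_one_div ℂ a m
    rw [nnnorm_one, ENNReal.coe_one, ENNReal.one_rpow, mul_one] at this
    simpa [hm, one_div] using this
  · have h := spectrum.pow_nnnorm_pow_one_div_tendsto_nhds_spectralRadius a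
    refine ge_of_tendsto h ?_
    filter_upwards [eventually_ge_atTop 1] with k hk
    have : (⨅ n : ℕ+, (‖a ^ (n : ℕ)‖₊ : ℝ≥0∞) ^ ((((n : ℕ) : ℝ))⁻¹)) ≤
        (‖a ^ ((⟨k, hk⟩ : ℕ+) : ℕ)‖₊ : ℝ≥0∞) ^ ((((⟨k, hk⟩ : ℕ+) : ℕ) : ℝ)⁻¹) :=
      iInf_le _ _
    simpa [one_div] using this

variable {A sqrtA : H →L[ℂ] H}

lemma anorm_eq (hsqrt : sqrtA.IsPositive) (hsq : sqrtA.comp sqrtA = A) (x : H) :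
    anorm A x = ‖sqrtA x‖ := by
  have h1 : A x = sqrtA (sqrtA x) := by rw [← hsq]; rfl
  have h2 : (inner ℂ (A x) x : ℂ) = inner ℂ (sqrtA x) (sqrtA x) := by
    rw [h1, ← ContinuousLinearMap.adjoint_inner_left,
      ContinuousLinearMap.isSelfAdjoint_iff'.mp hsqrt.isSelfAdjoint]
  rw [anorm, h2, inner_self_eq_norm_sq, Real.sqrt_sq (norm_nonneg _)]

lemma sqrt_eq_zero_iff (hsqrt : sqrtA.IsPositive) (hsq : sqrtA.comp sqrtA = A) (x : H) :
    sqrtA x = 0 ↔ A x = 0 := by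
  constructor
  · intro h
    have : A x = sqrtA (sqrtA x) := by rw [← hsq]; rfl
    rw [this, h, map_zero]
  · intro h
    have h0 : anorm A x = 0 := by simp [anorm, h]
    rw [anorm_eq hsqrt hsq] at h0
    exact norm_eq_zero.mp h0

open ContinuousLinearMap in
lemma mem_orth_iff (hsqrt : sqrtA.IsPositive) (hsq : sqrtA.comp sqrtA = A) (v : H) :
    v ∈ ((LinearMap.range (A : H →ₗ[ℂ] H)).topologicalClosure)ᗮ ↔ sqrtA v = 0 := by
  have hAsa : ContinuousLinearMap.adjoint A = A := by
    rw [← hsq]; rw [adjoint_comp, isSelfAdjoint_iff'.mp hsqrt.isSelfAdjoint]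
  constructor
  · intro hv
    have hAv : A v ∈ (LinearMap.range (A : H →ₗ[ℂ] H)).topologicalClosure :=
      Submodule.le_topologicalClosure _ ⟨v, rfl⟩
    have h0 : (inner ℂ (A v) v : ℂ) = 0 := (Submodule.mem_orthogonal _ v).mp hv _ hAv
    have : anorm A v = 0 := by simp [anorm, h0]
    rw [anorm_eq hsqrt hsq] at this
    exact norm_eq_zero.mp this
  · intro hv
    have hAv : A v = 0 := (sqrt_eq_zero_iff hsqrt hsq v).mp hv
    rw [Submodule.mem_orthogonal]
    intro u hu
    have hsub : (LinearMap.range (A : H →ₗ[ℂ] H) : Set H) ⊆ {u : H | (inner ℂ u v : ℂ) = 0} := by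
      rintro _ ⟨w, rfl⟩
      show (inner ℂ (A w) v : ℂ) = 0
      rw [← hAsa, adjoint_inner_left, hAv, inner_zero_right]
    have hclosed : IsClosed {u : H | (inner ℂ u v : ℂ) = 0} :=
      isClosed_eq (Continuous.inner continuous_id continuous_const) continuous_const
    exact closure_minimal hsub hclosed (by rw [← Submodule.topologicalClosure_coe]; exact hu)

open ContinuousLinearMap in
lemma sqrt_mem_Z (hsqrt : sqrtA.IsPositive) (hsq : sqrtA.comp sqrtA = A) (x : H) :
    sqrtA x ∈ (LinearMap.range (A : H →ₗ[ℂ] H)).topologicalClosure := by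
  haveI : CompleteSpace ((LinearMap.range (A : H →ₗ[ℂ] H)).topologicalClosure : Submodule ℂ H) :=
    (Submodule.isClosed_topologicalClosure _).completeSpace_coe
  set K := (LinearMap.range (A : H →ₗ[ℂ] H)).topologicalClosure with hK
  set w := sqrtA x - (Submodule.orthogonalProjectionOnto K (sqrtA x) : H) with hw
  have hworth : w ∈ Kᗮ := K.sub_starProjection_mem_orthogonal _
  have hsw : sqrtA w = 0 := (mem_orth_iff hsqrt hsq w).mp hworth
  have h1 : (inner ℂ (sqrtA x) w : ℂ) = 0 := by
    rw [← isSelfAdjoint_iff'.mp hsqrt.isSelfAdjoint, adjoint_inner_left, hsw, inner_zero_right]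
  have h2 : (inner ℂ ((Submodule.orthogonalProjectionOnto K (sqrtA x) : H)) w : ℂ) =
      0 := (Submodule.mem_orthogonal _ w).mp hworth _ (Submodule.orthogonalProjectionOnto K (sqrtA x)).2
  have : (inner ℂ w w : ℂ) = 0 := by
    rw [hw, inner_sub_left, h1, h2, sub_zero]
  have hw0 : w = 0 := inner_self_eq_zero.mp this
  have : sqrtA x = (Submodule.orthogonalProjectionOnto K (sqrtA x) : H) := by
    rwa [sub_eq_zero] at hw0
  rw [this]
  exact (Submodule.orthogonalProjectionOnto K (sqrtA x)).2

lemma memBA_orth {X : H →L[ℂ] H} (hsqrt : sqrtA.IsPositive) (hsq : sqrtA.comp sqrtA = A)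
    (hX : MemBA A X) {v : H} (hv : v ∈ ((LinearMap.range (A : H →ₗ[ℂ] H)).topologicalClosure)ᗮ) :
    X v ∈ ((LinearMap.range (A : H →ₗ[ℂ] H)).topologicalClosure)ᗮ := by
  obtain ⟨c, hc, hXc⟩ := hX
  rw [mem_orth_iff hsqrt hsq] at hv ⊢
  have := hXc v
  rw [anorm_eq hsqrt hsq, anorm_eq hsqrt hsq, hv, norm_zero, mul_zero] at this
  exact norm_eq_zero.mp (le_antisymm this (norm_nonneg _))

open ContinuousLinearMap in
lemma adj_maps_Z {X : H →L[ℂ] H} (hsqrt : sqrtA.IsPositive) (hsq : sqrtA.comp sqrtA = A)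
    (hX : MemBA A X) {z : H} (hz : z ∈ (LinearMap.range (A : H →ₗ[ℂ] H)).topologicalClosure) :
    ContinuousLinearMap.adjoint X z ∈ (LinearMap.range (A : H →ₗ[ℂ] H)).topologicalClosure := by
  haveI : CompleteSpace ((LinearMap.range (A : H →ₗ[ℂ] H)).topologicalClosure : Submodule ℂ H) :=
    (Submodule.isClosed_topologicalClosure _).completeSpace_coe
  have horth : ((LinearMap.range (A : H →ₗ[ℂ] H)).topologicalClosure)ᗮᗮ = (LinearMap.range (A : H →ₗ[ℂ] H)).topologicalClosure :=
    Submodule.orthogonal_orthogonal _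
  rw [← horth, Submodule.mem_orthogonal]
  intro w hw
  rw [adjoint_inner_right]
  exact (Submodule.mem_orthogonal' _ _).mp (memBA_orth hsqrt hsq hX hw) z hz

lemma dense_Z {C : Set H} (hC : IsClosed C) (h : ∀ x, A x ∈ C) {z : H}
    (hz : z ∈ (LinearMap.range (A : H →ₗ[ℂ] H)).topologicalClosure) : z ∈ C := by
  have hsub : (LinearMap.range (A : H →ₗ[ℂ] H) : Set H) ⊆ C := by rintro _ ⟨w, rfl⟩; exact h w
  exact closure_minimal hsub hC (by rw [← Submodule.topologicalClosure_coe]; exact hz)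

open ContinuousLinearMap in
lemma opANorm_eq (hsqrt : sqrtA.IsPositive) (hsq : sqrtA.comp sqrtA = A) (B : H →L[ℂ] H)
    (R' : ((LinearMap.range (A : H →ₗ[ℂ] H)).topologicalClosure : Submodule ℂ H) →L[ℂ]
      ((LinearMap.range (A : H →ₗ[ℂ] H)).topologicalClosure : Submodule ℂ H))
    (hcomm : ∀ x : H, sqrtA (B x) = (R' ⟨sqrtA x, sqrt_mem_Z hsqrt hsq x⟩ : H)) :
    opANorm A B = ‖R'‖ := by
  haveI : CompleteSpace ((LinearMap.range (A : H →ₗ[ℂ] H)).topologicalClosure : Submodule ℂ H) :=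
    (Submodule.isClosed_topologicalClosure _).completeSpace_coe
  have hmem : ‖R'‖ ∈ {c : ℝ | 0 ≤ c ∧ ∀ x : H, anorm A (B x) ≤ c * anorm A x} := by
    refine ⟨ContinuousLinearMap.opNorm_nonneg _, fun x => ?_⟩
    rw [anorm_eq hsqrt hsq, anorm_eq hsqrt hsq, hcomm x]
    calc ‖(R' ⟨sqrtA x, sqrt_mem_Z hsqrt hsq x⟩ : H)‖
        = ‖R' ⟨sqrtA x, sqrt_mem_Z hsqrt hsq x⟩‖ := rfl
      _ ≤ ‖R'‖ * ‖(⟨sqrtA x, sqrt_mem_Z hsqrt hsq x⟩ :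
            (LinearMap.range (A : H →ₗ[ℂ] H)).topologicalClosure)‖ := le_opNorm _ _
      _ = ‖R'‖ * ‖sqrtA x‖ := rfl
  refine le_antisymm (csInf_le ⟨0, fun c hc => hc.1⟩ hmem) (le_csInf ⟨_, hmem⟩ ?_)
  rintro c ⟨hc0, hc⟩
  refine opNorm_le_bound R' hc0 fun z => ?_
  set F : H →L[ℂ] ((LinearMap.range (A : H →ₗ[ℂ] H)).topologicalClosure : Submodule ℂ H) :=
    R'.comp (Submodule.orthogonalProjectionOnto (LinearMap.range (A : H →ₗ[ℂ] H)).topologicalClosure) with hF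
  set C : Set H := {v : H | ‖F v‖ ≤ c * ‖v‖} with hC
  have hCc : IsClosed C := isClosed_le (Continuous.norm F.continuous)
    (continuous_const.mul continuous_norm)
  have hFK : ∀ w : ((LinearMap.range (A : H →ₗ[ℂ] H)).topologicalClosure : Submodule ℂ H), F (w : H) = R' w := by
    intro w
    rw [hF, ContinuousLinearMap.comp_apply, Submodule.orthogonalProjectionOnto_mem_subspace_eq_self]
  have hInC : ∀ x, A x ∈ C := by
    intro x
    have hAx : A x = sqrtA (sqrtA x) := by rw [← hsq]; rfl
    have hmemK : A x ∈ (LinearMap.range (A : H →ₗ[ℂ] H)).topologicalClosure :=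
      Submodule.le_topologicalClosure _ ⟨x, rfl⟩
    have : F (A x) = R' ⟨sqrtA (sqrtA x), sqrt_mem_Z hsqrt hsq (sqrtA x)⟩ := by
      rw [hFK ⟨A x, hmemK⟩]
      congr 1
      exact Subtype.ext hAx
    show ‖F (A x)‖ ≤ c * ‖A x‖
    rw [this]
    have h1 : ‖R' ⟨sqrtA (sqrtA x), sqrt_mem_Z hsqrt hsq (sqrtA x)⟩‖
        = anorm A (B (sqrtA x)) := by
      rw [anorm_eq hsqrt hsq, hcomm (sqrtA x)]; rfl
    rw [h1]
    calc anorm A (B (sqrtA x)) ≤ c * anorm A (sqrtA x) := hc _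
      _ = c * ‖A x‖ := by rw [anorm_eq hsqrt hsq, ← hAx]
  have hzC : (z : H) ∈ C := dense_Z hCc hInC z.2
  have : ‖F (z : H)‖ ≤ c * ‖(z : H)‖ := hzC
  rwa [hFK z] at this

end Aux


set_option maxHeartbeats 1000000 in
open ContinuousLinearMap in
theorem stmt4 (A sqrtA T S : H →L[ℂ] H) (hA : A.IsPositive) (hA0 : A ≠ 0)
    (hsqrt : sqrtA.IsPositive) (hsq : sqrtA.comp sqrtA = A)
    (hT : MemBA A T) (hSmem : MemBA A S) (hS : IsDiamond sqrtA T S)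
    (Teff : ((LinearMap.range (A : H →ₗ[ℂ] H)).topologicalClosure : Submodule ℂ H) →L[ℂ]
      ((LinearMap.range (A : H →ₗ[ℂ] H)).topologicalClosure : Submodule ℂ H))
    (hTeff : ∀ x : ((LinearMap.range (A : H →ₗ[ℂ] H)).topologicalClosure : Submodule ℂ H),
      (Teff x : H) = projA A (T (projA A (x : H)))) :
    spectralRadius ℂ Teff = ENNReal.ofReal (rA A S) ∧ rA A S ≤ supSpecA A T := by
  haveI : CompleteSpace ((LinearMap.range (A : H →ₗ[ℂ] H)).topologicalClosure : Submodule ℂ H) :=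
    (Submodule.isClosed_topologicalClosure _).completeSpace_coe
  -- nontriviality
  obtain ⟨x₀, hx₀⟩ : ∃ x, A x ≠ 0 := by
    by_contra h
    push_neg at h
    exact hA0 (ContinuousLinearMap.ext h)
  haveI : Nontrivial H := ⟨⟨x₀, 0, fun h => hx₀ (by rw [h, map_zero])⟩⟩
  have hx₀0 : x₀ ≠ 0 := fun h => hx₀ (by rw [h, map_zero])
  haveI : Nontrivial ((LinearMap.range (A : H →ₗ[ℂ] H)).topologicalClosure : Submodule ℂ H) := by
    refine nontrivial_of_ne ⟨A x₀, Submodule.le_topologicalClosure _ ⟨x₀, rfl⟩⟩ 0 fun h => ?_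
    exact hx₀ (congrArg Subtype.val h)
  -- the restricted adjoint operator R
  set R : ((LinearMap.range (A : H →ₗ[ℂ] H)).topologicalClosure : Submodule ℂ H) →L[ℂ]
      ((LinearMap.range (A : H →ₗ[ℂ] H)).topologicalClosure : Submodule ℂ H) :=
    ContinuousLinearMap.codRestrict
      ((ContinuousLinearMap.adjoint T).comp (LinearMap.range (A : H →ₗ[ℂ] H)).topologicalClosure.subtypeL)
      (LinearMap.range (A : H →ₗ[ℂ] H)).topologicalClosure
      (fun z => adj_maps_Z hsqrt hsq hT z.2) with hRdef
  have hRapp : ∀ z : ((LinearMap.range (A : H →ₗ[ℂ] H)).topologicalClosure : Submodule ℂ H),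
      (R z : H) = ContinuousLinearMap.adjoint T (z : H) := fun z => rfl
  have hproj : ∀ v : H, projA A v =
      (Submodule.orthogonalProjectionOnto (LinearMap.range (A : H →ₗ[ℂ] H)).topologicalClosure v : H) := fun v => rfl
  have hprojK : ∀ z : ((LinearMap.range (A : H →ₗ[ℂ] H)).topologicalClosure : Submodule ℂ H),
      projA A (z : H) = (z : H) := by
    intro z
    rw [hproj, Submodule.orthogonalProjectionOnto_mem_subspace_eq_self]
  -- R is the adjoint of Teff
  have hadj : ContinuousLinearMap.adjoint Teff = R := by
    symm
    rw [eq_adjoint_iff]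
    intro x y
    rw [Submodule.coe_inner, Submodule.coe_inner, hRapp, hTeff y, hprojK y,
      adjoint_inner_left, hproj]
    rw [← Submodule.coe_inner, Submodule.inner_orthogonalProjectionOnto_eq_of_mem_left]
  -- power identities
  have hRpow : ∀ (n : ℕ) (z : ((LinearMap.range (A : H →ₗ[ℂ] H)).topologicalClosure : Submodule ℂ H)),
      ((R ^ n) z : H) = ((ContinuousLinearMap.adjoint T) ^ n) (z : H) := by
    intro n
    induction n with
    | zero => intro z; simp
    | succ n ih =>
      intro z
      rw [pow_succ, pow_succ, ContinuousLinearMap.mul_apply, ContinuousLinearMap.mul_apply,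
        ← hRapp z, ih (R z)]
  have hdia : ∀ x : H, sqrtA (S x) = ContinuousLinearMap.adjoint T (sqrtA x) :=
    fun x => ContinuousLinearMap.ext_iff.mp hS.1 x
  have hSpow : ∀ (n : ℕ) (x : H),
      sqrtA ((S ^ n) x) = ((ContinuousLinearMap.adjoint T) ^ n) (sqrtA x) := by
    intro n
    induction n with
    | zero => intro x; simp
    | succ n ih =>
      intro x
      rw [pow_succ, pow_succ, ContinuousLinearMap.mul_apply, ContinuousLinearMap.mul_apply,
        ← hdia x, ih (S x)]
  have hnorm : ∀ n : ℕ, opANorm A (S ^ n) = ‖R ^ n‖ := by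
    intro n
    refine opANorm_eq hsqrt hsq (S ^ n) (R ^ n) fun x => ?_
    rw [hSpow n x, ← hRpow n ⟨sqrtA x, sqrt_mem_Z hsqrt hsq x⟩]
  have hadjpow : ∀ n : ℕ, ContinuousLinearMap.adjoint (Teff ^ n) = R ^ n := by
    intro n
    induction n with
    | zero =>
      rw [pow_zero, pow_zero, ContinuousLinearMap.one_def, adjoint_id]
    | succ n ih =>
      rw [pow_succ, ContinuousLinearMap.mul_def, adjoint_comp, ih, hadj, ← ContinuousLinearMap.mul_def,
        ← pow_succ']
  have hTn : ∀ n : ℕ, ‖R ^ n‖ = ‖Teff ^ n‖ := by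
    intro n
    rw [← hadjpow n, LinearIsometryEquiv.norm_map adjoint (Teff ^ n)]
  -- Part 1
  have h2 : rA A S = ⨅ n : ℕ+, ‖Teff ^ (n : ℕ)‖ ^ ((((n : ℕ) : ℝ))⁻¹) := by
    unfold rA
    congr 1
    funext n
    rw [hnorm, hTn]
  have h3 : ENNReal.ofReal (rA A S) = spectralRadius ℂ Teff := by
    rw [h2, ENNReal.ofReal_iInf, sr_eq_iInf' Teff]
    congr 1
    funext n
    exact ofReal_norm_rpow (Teff ^ (n : ℕ)) ((((n : ℕ) : ℝ))⁻¹)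
      (inv_nonneg.mpr (Nat.cast_nonneg _))
  -- cancellation lemma
  have hcancel : ∀ X : H →L[ℂ] H, A.comp X = A → ∀ x, sqrtA (X x) = sqrtA x := by
    intro X hX x
    have hAX : A (X x) = A x := ContinuousLinearMap.ext_iff.mp hX x
    have h0 : A (X x - x) = 0 := by rw [map_sub, hAX, sub_self]
    have h1 : sqrtA (X x - x) = 0 := (sqrt_eq_zero_iff hsqrt hsq _).mpr h0
    rw [map_sub] at h1
    exact sub_eq_zero.mp h1
  -- boundedness of sigmaA
  obtain ⟨c, hc0, hcT⟩ := hT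
  have hbound : ∀ lam : ℂ, max ‖T‖ c < ‖lam‖ → lam ∈ rhoA A T := by
    intro lam hlt
    have hcl : c < ‖lam‖ := lt_of_le_of_lt (le_max_right _ _) hlt
    have hTl : ‖T‖ < ‖lam‖ := lt_of_le_of_lt (le_max_left _ _) hlt
    have hsp : lam ∉ spectrum ℂ T := fun hm =>
      absurd (spectrum.norm_le_norm_of_mem hm) (not_le.mpr hTl)
    have hU : IsUnit (lam • (1 : H →L[ℂ] H) - T) := by
      have := spectrum.notMem_iff.mp hsp
      rwa [Algebra.algebraMap_eq_smul_one] at this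
    obtain ⟨u, hu⟩ := hU
    set V := ((u⁻¹ : (H →L[ℂ] H)ˣ) : H →L[ℂ] H) with hV
    have huv : ∀ x, (lam • (1 : H →L[ℂ] H) - T) (V x) = x := by
      intro x
      have h := u.mul_inv
      rw [hu] at h
      calc (lam • (1 : H →L[ℂ] H) - T) (V x)
          = ((lam • (1 : H →L[ℂ] H) - T) * V) x := rfl
        _ = (1 : H →L[ℂ] H) x := by rw [h]
        _ = x := rfl
    have hvu : ∀ x, V ((lam • (1 : H →L[ℂ] H) - T) x) = x := by
      intro x
      have h := u.inv_mul
      rw [hu] at h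
      calc V ((lam • (1 : H →L[ℂ] H) - T) x)
          = (V * (lam • (1 : H →L[ℂ] H) - T)) x := rfl
        _ = (1 : H →L[ℂ] H) x := by rw [h]
        _ = x := rfl
    have hmemV : MemBA A V := by
      refine ⟨(‖lam‖ - c)⁻¹, inv_pos.mpr (by linarith), fun x => ?_⟩
      have hx : lam • (V x) - T (V x) = x := by
        have := huv x
        simpa [ContinuousLinearMap.sub_apply, ContinuousLinearMap.smul_apply] using this
      have hkey : (‖lam‖ - c) * anorm A (V x) ≤ anorm A x := by
        have e1 : sqrtA x = lam • sqrtA (V x) - sqrtA (T (V x)) := by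
          rw [← map_smul, ← map_sub, hx]
        have e2 : ‖lam • sqrtA (V x)‖ - ‖sqrtA (T (V x))‖ ≤ ‖sqrtA x‖ := by
          rw [e1]; exact norm_sub_norm_le _ _
        have e3 : ‖lam • sqrtA (V x)‖ = ‖lam‖ * ‖sqrtA (V x)‖ := norm_smul lam _
        have e4 : ‖sqrtA (T (V x))‖ ≤ c * ‖sqrtA (V x)‖ := by
          rw [← anorm_eq hsqrt hsq, ← anorm_eq hsqrt hsq]
          exact hcT (V x)
        rw [anorm_eq hsqrt hsq, anorm_eq hsqrt hsq]
        nlinarith [norm_nonneg (sqrtA (V x))]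
      have hpos : 0 < ‖lam‖ - c := by linarith
      rw [inv_mul_eq_div, le_div_iff₀ hpos]
      nlinarith [hkey]
    refine ⟨?_, V, ?_, hmemV, ?_, ?_⟩
    · intro h
      have := huv x₀
      rw [h] at this
      exact hx₀0 (by simpa using this.symm)
    · intro h
      have := huv x₀
      rw [h] at this
      exact hx₀0 (by simpa using this.symm)
    · exact ContinuousLinearMap.ext fun x => by
        show A ((lam • (1 : H →L[ℂ] H) - T) (V x)) = A x
        rw [huv x]
    · exact ContinuousLinearMap.ext fun x => by
        show A (V ((lam • (1 : H →L[ℂ] H) - T) x)) = A x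
        rw [hvu x]
  have hbdd : BddAbove ((fun z : ℂ => ‖z‖) '' sigmaA A T) := by
    refine ⟨max ‖T‖ c, ?_⟩
    rintro _ ⟨z, hz, rfl⟩
    by_contra h
    push_neg at h
    exact hz (hbound z h)
  -- spectrum of Teff is contained in sigmaA
  have hsub : spectrum ℂ Teff ⊆ sigmaA A T := by
    intro lam hlam
    by_contra h
    have hrho : lam ∈ rhoA A T := by
      simpa [sigmaA] using h
    obtain ⟨hne, S₀, hS₀ne, hS₀mem, hc1, hc2⟩ := hrho
    have p1 : ∀ x, sqrtA ((lam • (1 : H →L[ℂ] H) - T) (S₀ x)) = sqrtA x :=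
      fun x => hcancel _ hc1 x
    have p2 : ∀ x, sqrtA (S₀ ((lam • (1 : H →L[ℂ] H) - T) x)) = sqrtA x :=
      fun x => hcancel _ hc2 x
    have P1 : sqrtA.comp ((lam • (1 : H →L[ℂ] H) - T).comp S₀) = sqrtA :=
      ContinuousLinearMap.ext p1
    have P2 : sqrtA.comp (S₀.comp (lam • (1 : H →L[ℂ] H) - T)) = sqrtA :=
      ContinuousLinearMap.ext p2
    have hsa : ContinuousLinearMap.adjoint sqrtA = sqrtA := isSelfAdjoint_iff'.mp hsqrt.isSelfAdjoint
    have Q1 := congrArg ContinuousLinearMap.adjoint P1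
    rw [adjoint_comp, adjoint_comp, hsa] at Q1
    have Q2 := congrArg ContinuousLinearMap.adjoint P2
    rw [adjoint_comp, adjoint_comp, hsa] at Q2
    have q1 : ∀ v, ContinuousLinearMap.adjoint S₀
        (ContinuousLinearMap.adjoint (lam • (1 : H →L[ℂ] H) - T) (sqrtA v)) = sqrtA v :=
      fun v => ContinuousLinearMap.ext_iff.mp Q1 v
    have q2 : ∀ v, ContinuousLinearMap.adjoint (lam • (1 : H →L[ℂ] H) - T)
        (ContinuousLinearMap.adjoint S₀ (sqrtA v)) = sqrtA v :=
      fun v => ContinuousLinearMap.ext_iff.mp Q2 v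
    have hGadj : ContinuousLinearMap.adjoint (lam • (1 : H →L[ℂ] H) - T)
        = (starRingEnd ℂ lam) • (1 : H →L[ℂ] H) - ContinuousLinearMap.adjoint T := by
      rw [← star_eq_adjoint, star_sub, star_smul, star_one, star_eq_adjoint]
      rfl
    have hG : ∀ z : ((LinearMap.range (A : H →ₗ[ℂ] H)).topologicalClosure : Submodule ℂ H),
        ContinuousLinearMap.adjoint (lam • (1 : H →L[ℂ] H) - T) (z : H) ∈
          (LinearMap.range (A : H →ₗ[ℂ] H)).topologicalClosure := by
      intro z
      rw [hGadj]
      exact Submodule.sub_mem _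
        (Submodule.smul_mem _ _ (by simpa using z.2))
        (adj_maps_Z hsqrt hsq ⟨c, hc0, hcT⟩ z.2)
    set E : ((LinearMap.range (A : H →ₗ[ℂ] H)).topologicalClosure : Submodule ℂ H) →L[ℂ]
        ((LinearMap.range (A : H →ₗ[ℂ] H)).topologicalClosure : Submodule ℂ H) :=
      ContinuousLinearMap.codRestrict
        ((ContinuousLinearMap.adjoint (lam • (1 : H →L[ℂ] H) - T)).comp
          (LinearMap.range (A : H →ₗ[ℂ] H)).topologicalClosure.subtypeL)
        (LinearMap.range (A : H →ₗ[ℂ] H)).topologicalClosure (fun z => hG z) with hE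
    set W : ((LinearMap.range (A : H →ₗ[ℂ] H)).topologicalClosure : Submodule ℂ H) →L[ℂ]
        ((LinearMap.range (A : H →ₗ[ℂ] H)).topologicalClosure : Submodule ℂ H) :=
      ContinuousLinearMap.codRestrict
        ((ContinuousLinearMap.adjoint S₀).comp
          (LinearMap.range (A : H →ₗ[ℂ] H)).topologicalClosure.subtypeL)
        (LinearMap.range (A : H →ₗ[ℂ] H)).topologicalClosure
        (fun z => adj_maps_Z hsqrt hsq hS₀mem z.2) with hW
    have hWE : W * E = 1 := by
      refine ContinuousLinearMap.ext fun z => Subtype.ext ?_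
      show ContinuousLinearMap.adjoint S₀
        (ContinuousLinearMap.adjoint (lam • (1 : H →L[ℂ] H) - T) (z : H)) = (z : H)
      have hclosed : IsClosed {v : H | ContinuousLinearMap.adjoint S₀
          (ContinuousLinearMap.adjoint (lam • (1 : H →L[ℂ] H) - T) v) = v} :=
        isClosed_eq (((ContinuousLinearMap.adjoint S₀).comp
          (ContinuousLinearMap.adjoint (lam • (1 : H →L[ℂ] H) - T))).continuous) continuous_id
      refine dense_Z hclosed (fun x => ?_) z.2
      show ContinuousLinearMap.adjoint S₀
        (ContinuousLinearMap.adjoint (lam • (1 : H →L[ℂ] H) - T) (A x)) = A x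
      have hAx : A x = sqrtA (sqrtA x) := by rw [← hsq]; rfl
      rw [hAx]
      exact q1 (sqrtA x)
    have hEW : E * W = 1 := by
      refine ContinuousLinearMap.ext fun z => Subtype.ext ?_
      show ContinuousLinearMap.adjoint (lam • (1 : H →L[ℂ] H) - T)
        (ContinuousLinearMap.adjoint S₀ (z : H)) = (z : H)
      have hclosed : IsClosed {v : H | ContinuousLinearMap.adjoint (lam • (1 : H →L[ℂ] H) - T)
          (ContinuousLinearMap.adjoint S₀ v) = v} :=
        isClosed_eq (((ContinuousLinearMap.adjoint (lam • (1 : H →L[ℂ] H) - T)).comp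
          (ContinuousLinearMap.adjoint S₀)).continuous) continuous_id
      refine dense_Z hclosed (fun x => ?_) z.2
      show ContinuousLinearMap.adjoint (lam • (1 : H →L[ℂ] H) - T)
        (ContinuousLinearMap.adjoint S₀ (A x)) = A x
      have hAx : A x = sqrtA (sqrtA x) := by rw [← hsq]; rfl
      rw [hAx]
      exact q2 (sqrtA x)
    have hUE : IsUnit E := ⟨⟨E, W, hEW, hWE⟩, rfl⟩
    have hEeq : ContinuousLinearMap.adjoint
        (algebraMap ℂ (((LinearMap.range (A : H →ₗ[ℂ] H)).topologicalClosure : Submodule ℂ H) →L[ℂ]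
          ((LinearMap.range (A : H →ₗ[ℂ] H)).topologicalClosure : Submodule ℂ H)) lam - Teff) = E := by
      refine ContinuousLinearMap.ext fun z => Subtype.ext ?_
      have lhs : ContinuousLinearMap.adjoint (algebraMap ℂ _ lam - Teff)
          = (starRingEnd ℂ lam) • 1 - R := by
        rw [← star_eq_adjoint, star_sub, Algebra.algebraMap_eq_smul_one, star_smul, star_one,
          star_eq_adjoint, hadj]
        rfl
      rw [lhs]
      show ((starRingEnd ℂ lam) • (z : H) - (R z : H)) = _
      rw [hRapp z]
      show (starRingEnd ℂ lam) • (z : H) - ContinuousLinearMap.adjoint T (z : H)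
        = ContinuousLinearMap.adjoint (lam • (1 : H →L[ℂ] H) - T) (z : H)
      rw [hGadj]
      rfl
    have hUnit : IsUnit (algebraMap ℂ (((LinearMap.range (A : H →ₗ[ℂ] H)).topologicalClosure : Submodule ℂ H)
        →L[ℂ] ((LinearMap.range (A : H →ₗ[ℂ] H)).topologicalClosure : Submodule ℂ H)) lam - Teff) := by
      have h1 : IsUnit (star (algebraMap ℂ _ lam - Teff)) := by
        rw [star_eq_adjoint, hEeq]
        exact hUE
      exact isUnit_star.mp h1
    exact (spectrum.notMem_iff.mpr hUnit) hlam
  -- assemble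
  have hsup0 : 0 ≤ supSpecA A T := by
    rcases (sigmaA A T).eq_empty_or_nonempty with he | ⟨z, hz⟩
    · simp [supSpecA, he, Real.sSup_empty]
    · exact le_trans (norm_nonneg z) (le_csSup hbdd ⟨z, hz, rfl⟩)
  have hle : spectralRadius ℂ Teff ≤ ENNReal.ofReal (supSpecA A T) := by
    rw [spectralRadius]
    refine iSup₂_le fun k hk => ?_
    rw [← enorm_eq_nnnorm, ← ofReal_norm]
    exact ENNReal.ofReal_le_ofReal (le_csSup hbdd ⟨k, hsub hk, rfl⟩)
  refine ⟨h3.symm, ?_⟩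
  rw [h3.symm] at hle
  by_cases hra : rA A S ≤ 0
  · linarith
  · exact (ENNReal.ofReal_le_ofReal_iff hsup0).mp hle
end

section
/- Let T ∈ B_{A^{1/2}}(H), let S ∈ B_{A^{1/2}}(H) be the A^{1/2}-adjoint T^⋄ of T, and let S' be the A^{1/2}-adjoint S^⋄ of S. Then the operator norm of S' equals ‖S‖_A, i.e., ‖(T^⋄)^⋄‖ = ‖T^⋄‖_A. -/
variable {H : Type*} [NormedAddCommGroup H] [InnerProductSpace ℂ H] [CompleteSpace H]

theorem stmt5 (A sqrtA T S S' : H →L[ℂ] H) (hA : A.IsPositive) (hA0 : A ≠ 0)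
    (hsqrt : sqrtA.IsPositive) (hsq : sqrtA.comp sqrtA = A)
    (hT : MemBA A T) (hSmem : MemBA A S)
    (hS : IsDiamond sqrtA T S) (hS' : IsDiamond sqrtA S S') :
    ‖S'‖ = opANorm A S := by

  obtain ⟨hS'eq, hS'rg⟩ := hS'
  have hRsa : ContinuousLinearMap.adjoint sqrtA = sqrtA := by
    rw [← ContinuousLinearMap.star_eq_adjoint]; exact hsqrt.isSelfAdjoint
  have hanorm : ∀ x : H, anorm A x = ‖sqrtA x‖ := by
    intro x
    have h1 : (inner ℂ (A x) x : ℂ) = inner ℂ (sqrtA x) (sqrtA x) := by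
      rw [← hsq, ContinuousLinearMap.comp_apply]
      nth_rewrite 1 [← hRsa]
      exact ContinuousLinearMap.adjoint_inner_left _ _ _
    rw [anorm, h1, inner_self_eq_norm_sq]
    exact Real.sqrt_sq (norm_nonneg _)
  have hadj : ∀ x : H, ContinuousLinearMap.adjoint S' (sqrtA x) = sqrtA (S x) := by
    have h := congrArg ContinuousLinearMap.adjoint hS'eq
    rw [ContinuousLinearMap.adjoint_comp, ContinuousLinearMap.adjoint_comp,
        ContinuousLinearMap.adjoint_adjoint, hRsa] at h
    intro x
    have := ContinuousLinearMap.ext_iff.mp h x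
    simpa using this
  set K : Submodule ℂ H := (LinearMap.range (sqrtA : H →ₗ[ℂ] H)).topologicalClosure with hK
  haveI : CompleteSpace K := (Submodule.isClosed_topologicalClosure _).completeSpace_coe
  have hKset : (K : Set H) = closure (Set.range ⇑sqrtA) := by
    rw [hK, Submodule.topologicalClosure_coe, LinearMap.coe_range, ContinuousLinearMap.coe_coe]
  have hzero : ∀ z ∈ Kᗮ, ContinuousLinearMap.adjoint S' z = 0 := by
    intro z hz
    apply ext_inner_right ℂ
    intro v
    rw [ContinuousLinearMap.adjoint_inner_left, inner_zero_left]
    have hv : S' v ∈ K := by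
      rw [← SetLike.mem_coe, hKset]; exact hS'rg ⟨v, rfl⟩
    exact (Submodule.mem_orthogonal' K z).mp hz _ hv
  have hnadj : ‖ContinuousLinearMap.adjoint S'‖ = ‖S'‖ :=
    LinearIsometryEquiv.norm_map ContinuousLinearMap.adjoint S'
  have key : ∀ c : ℝ, 0 ≤ c → (∀ x, ‖sqrtA (S x)‖ ≤ c * ‖sqrtA x‖) →
      ‖ContinuousLinearMap.adjoint S'‖ ≤ c := by
    intro c hc hb
    apply ContinuousLinearMap.opNorm_le_bound _ hc
    intro u
    obtain ⟨y, hy, z, hz, rfl⟩ := K.exists_add_mem_mem_orthogonal u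
    have hcl : ∀ v ∈ closure (Set.range ⇑sqrtA),
        ‖ContinuousLinearMap.adjoint S' v‖ ≤ c * ‖v‖ := by
      intro v hv
      have hsub : closure (Set.range ⇑sqrtA) ⊆
          {w : H | ‖ContinuousLinearMap.adjoint S' w‖ ≤ c * ‖w‖} := by
        refine closure_minimal ?_ ?_
        · rintro _ ⟨x, rfl⟩
          simp only [Set.mem_setOf_eq]
          rw [hadj x]; exact hb x
        · exact isClosed_le ((ContinuousLinearMap.adjoint S').continuous.norm)
            (continuous_const.mul continuous_norm)
      exact hsub hv
    have h1 : ‖ContinuousLinearMap.adjoint S' y‖ ≤ c * ‖y‖ :=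
      hcl y (by rw [← hKset]; exact hy)
    have hinner : RCLike.re (inner ℂ y z : ℂ) = 0 := by
      rw [(Submodule.mem_orthogonal K z).mp hz y hy]; simp
    have hnorm2 : ‖y + z‖ ^ 2 = ‖y‖ ^ 2 + ‖z‖ ^ 2 := by
      rw [norm_add_sq (𝕜 := ℂ), hinner]; ring
    have hyle : ‖y‖ ≤ ‖y + z‖ := by
      nlinarith [norm_nonneg y, norm_nonneg (y + z), norm_nonneg z]
    calc ‖ContinuousLinearMap.adjoint S' (y + z)‖
        = ‖ContinuousLinearMap.adjoint S' y‖ := by rw [map_add, hzero z hz, add_zero]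
      _ ≤ c * ‖y‖ := h1
      _ ≤ c * ‖y + z‖ := mul_le_mul_of_nonneg_left hyle hc
  have hmem : ‖S'‖ ∈ {c : ℝ | 0 ≤ c ∧ ∀ x : H, anorm A (S x) ≤ c * anorm A x} := by
    refine ⟨norm_nonneg _, fun x => ?_⟩
    rw [hanorm, hanorm, ← hadj x]
    calc ‖ContinuousLinearMap.adjoint S' (sqrtA x)‖
        ≤ ‖ContinuousLinearMap.adjoint S'‖ * ‖sqrtA x‖ :=
          (ContinuousLinearMap.adjoint S').le_opNorm _
      _ = ‖S'‖ * ‖sqrtA x‖ := by rw [hnadj]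
  rw [opANorm]
  refine le_antisymm (le_csInf ⟨_, hmem⟩ fun c hc => ?_)
    (csInf_le ⟨0, fun c hc => hc.1⟩ hmem)
  rw [← hnadj]
  exact key c hc.1 fun x => by have := hc.2 x; rwa [hanorm, hanorm] at this
end

section
/- Let T ∈ B_{A^{1/2}}(H) satisfy TA^{1/2} = A^{1/2}T, and let S ∈ B_{A^{1/2}}(H) be the A^{1/2}-adjoint T^⋄ of T. Then sup{|λ| : λ ∈ σ_A(S)} = r_A(S). -/
open scoped ENNReal NNReal
open Filter Topology



variable {H : Type*} [NormedAddCommGroup H] [InnerProductSpace ℂ H] [CompleteSpace H]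

lemma specLemma {𝔸 : Type*} [NormedRing 𝔸] [NormedAlgebra ℂ 𝔸] [CompleteSpace 𝔸]
    [NormOneClass 𝔸] (a : 𝔸) :
    sSup ((fun z : ℂ => ‖z‖) '' spectrum ℂ a)
      = ⨅ n : ℕ+, ‖a ^ (n : ℕ)‖ ^ ((((n : ℕ) : ℝ))⁻¹) := by
  haveI : Nontrivial 𝔸 := NormOneClass.nontrivial (G := 𝔸)
  have hne : (spectrum ℂ a).Nonempty := spectrum.nonempty a
  have hbdd : BddAbove ((fun z : ℂ => ‖z‖) '' spectrum ℂ a) := by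
    refine ⟨‖a‖, ?_⟩
    rintro y ⟨z, hz, rfl⟩
    simpa using spectrum.norm_le_norm_of_mem hz
  have hfin : spectralRadius ℂ a ≠ ⊤ :=
    ne_top_of_le_ne_top ENNReal.coe_ne_top (spectrum.spectralRadius_le_nnnorm (𝕜 := ℂ) a)
  set r : ℝ := (spectralRadius ℂ a).toReal with hr
  -- LHS = r
  have hLHS : sSup ((fun z : ℂ => ‖z‖) '' spectrum ℂ a) = r := by
    have hub : ∀ y ∈ (fun z : ℂ => ‖z‖) '' spectrum ℂ a, y ≤ r := by
      rintro y ⟨z, hz, rfl⟩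
      have h1 : (‖z‖₊ : ℝ≥0∞) ≤ spectralRadius ℂ a :=
        le_iSup₂ (f := fun k (_ : k ∈ spectrum ℂ a) => (‖k‖₊ : ℝ≥0∞)) z hz
      simpa using ENNReal.toReal_mono hfin h1
    apply le_antisymm (csSup_le (hne.image _) hub)
    -- r ≤ sSup
    by_contra hcon
    push_neg at hcon
    set M := sSup ((fun z : ℂ => ‖z‖) '' spectrum ℂ a) with hM
    have hM0 : 0 ≤ M := by
      obtain ⟨z, hz⟩ := hne
      exact le_trans (norm_nonneg z) (le_csSup hbdd ⟨z, hz, rfl⟩)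
    have h2 : spectralRadius ℂ a ≤ ENNReal.ofReal M := by
      refine iSup₂_le fun k hk => ?_
      have hk' : ‖k‖ ≤ M := le_csSup hbdd ⟨k, hk, rfl⟩
      rw [← ENNReal.ofReal_coe_nnreal, coe_nnnorm]
      exact ENNReal.ofReal_le_ofReal hk'
    have := ENNReal.toReal_mono ENNReal.ofReal_ne_top h2
    rw [ENNReal.toReal_ofReal hM0] at this
    exact absurd this (not_le.mpr hcon)
  -- RHS = r
  have key : ∀ n : ℕ, (((‖a ^ n‖₊ : ℝ≥0∞) ^ (1 / (n:ℝ))).toReal) = ‖a ^ n‖ ^ ((n:ℝ))⁻¹ := by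
    intro n
    rw [one_div, ← ENNReal.toReal_rpow]
    simp
  have htendsto : Tendsto (fun n : ℕ => ‖a ^ n‖ ^ ((n:ℝ))⁻¹) atTop (𝓝 r) := by
    have h := spectrum.pow_nnnorm_pow_one_div_tendsto_nhds_spectralRadius a
    have h2 := (ENNReal.tendsto_toReal hfin).comp h
    have heq : (ENNReal.toReal ∘ fun n : ℕ => (‖a ^ n‖₊ : ℝ≥0∞) ^ (1 / (n:ℝ)))
        = fun n : ℕ => ‖a ^ n‖ ^ ((n:ℝ))⁻¹ := by
      funext n; exact key n
    rwa [heq] at h2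
  have hle : ∀ n : ℕ+, r ≤ ‖a ^ (n:ℕ)‖ ^ (((n:ℕ):ℝ))⁻¹ := by
    intro n
    obtain ⟨m, hm⟩ : ∃ m : ℕ, (n : ℕ) = m + 1 := ⟨(n:ℕ) - 1, by have h := n.pos; omega⟩
    have h := spectrum.spectralRadius_le_pow_nnnorm_pow_one_div ℂ a m
    have h1 : (‖(1:𝔸)‖₊ : ℝ≥0∞) = 1 := by
      simp [nnnorm_one]
    rw [h1, ENNReal.one_rpow, mul_one] at h
    have h2 := ENNReal.toReal_mono (by
      refine ENNReal.rpow_ne_top_of_nonneg (by positivity) ENNReal.coe_ne_top) h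
    rw [show (1/((m:ℝ)+1)) = 1/(((m+1 : ℕ)):ℝ) by push_cast; ring] at h2
    rw [key (m+1)] at h2
    rw [hm]
    exact_mod_cast h2
  have hbddb : BddBelow (Set.range fun n : ℕ+ => ‖a ^ (n:ℕ)‖ ^ (((n:ℕ):ℝ))⁻¹) := by
    refine ⟨0, ?_⟩
    rintro y ⟨n, rfl⟩
    positivity
  apply le_antisymm
  · rw [hLHS]
    -- r ≤ iInf
    exact le_ciInf hle
  · rw [hLHS]
    refine ge_of_tendsto htendsto ?_
    filter_upwards [eventually_ge_atTop 1] with n hn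
    exact ciInf_le_of_le hbddb ⟨n, hn⟩ (le_refl _)

set_option maxHeartbeats 2000000 in
set_option synthInstance.maxHeartbeats 400000 in
theorem stmt6 (A sqrtA T S : H →L[ℂ] H) (hA : A.IsPositive) (hA0 : A ≠ 0)
    (hsqrt : sqrtA.IsPositive) (hsq : sqrtA.comp sqrtA = A)
    (hT : MemBA A T) (hcomm : T.comp sqrtA = sqrtA.comp T)
    (hSmem : MemBA A S) (hS : IsDiamond sqrtA T S) :
    supSpecA A S = rA A S := by
  classical
  set Tst := ContinuousLinearMap.adjoint T with hTstdef
  have hsa : ContinuousLinearMap.adjoint sqrtA = sqrtA := by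
    rw [← ContinuousLinearMap.star_eq_adjoint]; exact hsqrt.isSelfAdjoint
  have hsym : ∀ x y : H, (inner ℂ (sqrtA x) y : ℂ) = inner ℂ x (sqrtA y) :=
    fun x y => hsqrt.1 x y
  -- the A-seminorm is ‖sqrtA x‖
  have hanorm : ∀ x : H, anorm A x = ‖sqrtA x‖ := by
    intro x
    have h1 : (inner ℂ (A x) x : ℂ) = inner ℂ (sqrtA x) (sqrtA x) := by
      rw [← hsq]
      show (inner ℂ (sqrtA (sqrtA x)) x : ℂ) = _
      rw [hsym (sqrtA x) x]
    rw [anorm, h1, inner_self_eq_norm_sq (𝕜 := ℂ)]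
    exact Real.sqrt_sq (norm_nonneg _)
  -- the space K
  set K : Submodule ℂ H := (LinearMap.range (sqrtA : H →ₗ[ℂ] H)).topologicalClosure with hKdef
  haveI : CompleteSpace K := (Submodule.isClosed_topologicalClosure _).completeSpace_coe
  have hKset : (K : Set H) = closure (Set.range ⇑sqrtA) := by
    rw [hKdef, Submodule.topologicalClosure_coe, LinearMap.coe_range]; rfl
  have hmemK : ∀ x : H, sqrtA x ∈ K :=
    fun x => Submodule.le_topologicalClosure _ (LinearMap.mem_range_self _ x)
  -- members of Kᗮ are killed by sqrtA
  have hK_orth : ∀ y : H, y ∈ Kᗮ → sqrtA y = 0 := by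
    intro y hy
    have h0 : (inner ℂ (sqrtA y) (sqrtA y) : ℂ) = 0 := by
      have h2 := (Submodule.mem_orthogonal K y).mp hy (sqrtA (sqrtA y)) (hmemK _)
      rw [hsym y (sqrtA y)]
      exact inner_eq_zero_symm.mp h2
    exact inner_self_eq_zero.mp h0
  -- kernel of sqrtA lies in Kᗮ
  have hker_orth : ∀ v : H, sqrtA v = 0 → v ∈ Kᗮ := by
    intro v hv
    rw [Submodule.mem_orthogonal]
    intro u hu
    have hclosed : IsClosed {u : H | (inner ℂ u v : ℂ) = 0} :=
      isClosed_eq (Continuous.inner continuous_id continuous_const) continuous_const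
    have hsub : Set.range ⇑sqrtA ⊆ {u : H | (inner ℂ u v : ℂ) = 0} := by
      rintro _ ⟨w, rfl⟩
      show (inner ℂ (sqrtA w) v : ℂ) = 0
      rw [hsym w v, hv, inner_zero_right]
    have hu' : u ∈ closure (Set.range ⇑sqrtA) := by rw [← hKset]; exact hu
    exact closure_minimal hsub hclosed hu'
  -- adjoint commutation
  have hTadj : ∀ x : H, Tst (sqrtA x) = sqrtA (Tst x) := by
    have h := congrArg ContinuousLinearMap.adjoint hcomm
    rw [ContinuousLinearMap.adjoint_comp, ContinuousLinearMap.adjoint_comp, hsa] at h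
    intro x
    have hx := ContinuousLinearMap.ext_iff.mp h x
    simpa using hx.symm
  have hTap : ∀ x : H, T (sqrtA x) = sqrtA (T x) := by
    intro x
    have hx := ContinuousLinearMap.ext_iff.mp hcomm x
    simpa using hx
  -- invariance of K
  have hmapK : ∀ (f : H →L[ℂ] H), (∀ x : H, f (sqrtA x) = sqrtA (f x)) →
      ∀ k : H, k ∈ K → f k ∈ K := by
    intro f hf k hk
    have hk' : k ∈ closure (Set.range ⇑sqrtA) := by rw [← hKset]; exact hk
    have h1 : f k ∈ closure (⇑f '' Set.range ⇑sqrtA) :=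
      image_closure_subset_closure_image f.continuous ⟨k, hk', rfl⟩
    have hsub : ⇑f '' Set.range ⇑sqrtA ⊆ Set.range ⇑sqrtA := by
      rintro _ ⟨_, ⟨x, rfl⟩, rfl⟩
      exact ⟨f x, (hf x).symm⟩
    have h2 : f k ∈ (K : Set H) := by
      rw [hKset]; exact closure_mono hsub h1
    exact h2
  -- the operators ψ, B, σK, P
  have hTstK : ∀ k : H, k ∈ K → Tst k ∈ K := hmapK Tst hTadj
  have hTK : ∀ k : H, k ∈ K → T k ∈ K := hmapK T hTap
  have hsqK : ∀ k : H, k ∈ K → sqrtA k ∈ K := hmapK sqrtA (fun _ => rfl)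
  set ψ : H →L[ℂ] K := ContinuousLinearMap.codRestrict sqrtA K hmemK with hψdef
  have hψval : ∀ x : H, (ψ x : H) = sqrtA x := fun x => rfl
  set B : K →L[ℂ] K :=
    ContinuousLinearMap.codRestrict (Tst.comp K.subtypeL) K (fun k => hTstK _ k.2) with hBdef
  have hBval : ∀ k : K, (B k : H) = Tst k := fun k => rfl
  set σK : K →L[ℂ] K :=
    ContinuousLinearMap.codRestrict (sqrtA.comp K.subtypeL) K (fun k => hsqK _ k.2) with hσdef
  have hσval : ∀ k : K, (σK k : H) = sqrtA k := fun k => rfl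
  set P : H →L[ℂ] K := K.orthogonalProjectionOnto with hPdef
  -- dense range of ψ
  have hdense : DenseRange ψ := by
    rw [denseRange_iff_closure_range]
    rw [Set.eq_univ_iff_forall]
    intro k
    have hind : Topology.IsInducing (Subtype.val : K → H) := Topology.IsInducing.subtypeVal
    rw [hind.closure_eq_preimage_closure_image]
    show (k : H) ∈ closure (Subtype.val '' Set.range ⇑ψ)
    have himg : Subtype.val '' Set.range ⇑ψ = Set.range ⇑sqrtA := by
      ext y
      constructor
      · rintro ⟨_, ⟨x, rfl⟩, rfl⟩; exact ⟨x, rfl⟩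
      · rintro ⟨x, rfl⟩; exact ⟨ψ x, ⟨x, rfl⟩, rfl⟩
    rw [himg, ← hKset]
    exact k.2
  -- ψ intertwines S and B
  have hSap : ∀ x : H, sqrtA (S x) = Tst (sqrtA x) := by
    intro x
    have hx := ContinuousLinearMap.ext_iff.mp hS.1 x
    simpa using hx
  have hψS : ∀ x : H, ψ (S x) = B (ψ x) := by
    intro x
    apply Subtype.ext
    rw [hψval, hBval, hψval]
    exact hSap x
  have hψpow : ∀ (n : ℕ) (x : H), ψ ((S ^ n) x) = (B ^ n) (ψ x) := by
    intro n
    induction n with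
    | zero => intro x; simp
    | succ n ih =>
      intro x
      rw [pow_succ, pow_succ, ContinuousLinearMap.mul_apply, ContinuousLinearMap.mul_apply,
        ih (S x), hψS x]
  -- S maps into K
  have hSK : ∀ x : H, S x ∈ K := by
    intro x
    have : S x ∈ (K : Set H) := by rw [hKset]; exact hS.2 ⟨x, rfl⟩
    exact this
  -- Tst x - S x ∈ Kᗮ
  have hTS_orth : ∀ x : H, Tst x - S x ∈ Kᗮ := by
    intro x
    apply hker_orth
    rw [map_sub, hSap x, hTadj x, sub_self]
  -- Tst preserves Kᗮ
  have hTst_orthC : ∀ v : H, v ∈ Kᗮ → Tst v ∈ Kᗮ := by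
    intro v hv
    rw [Submodule.mem_orthogonal]
    intro u hu
    have h1 : (inner ℂ u (Tst v) : ℂ) = inner ℂ (T u) v := by
      rw [hTstdef]
      exact (ContinuousLinearMap.adjoint_inner_right T u v)
    rw [h1]
    exact inner_eq_zero_symm.mp ((Submodule.mem_orthogonal Kᗮ (T u)).mp
      (Submodule.le_orthogonal_orthogonal K (hTK u hu)) v hv)
  -- ψ (P x) = ψ x
  have hψP : ∀ x : H, ψ ((P x : K) : H) = ψ x := by
    intro x
    apply Subtype.ext
    rw [hψval, hψval]
    have h1 : sqrtA (x - (P x : H)) = 0 := hK_orth _ (K.sub_starProjection_mem_orthogonal x)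
    rw [map_sub] at h1
    linear_combination (norm := module) -h1
  -- P (Tst x) = B (P x)
  have hPT : ∀ x : H, P (Tst x) = B (P x) := by
    intro x
    have hdecomp : Tst x = Tst (P x : H) + Tst (x - (P x : H)) := by
      rw [← map_add]; congr 1; abel
    rw [hdecomp, map_add]
    have h1 : P (Tst (x - (P x : H))) = 0 :=
      Submodule.orthogonalProjectionOnto_apply_of_mem_orthogonal
        (hTst_orthC _ (K.sub_starProjection_mem_orthogonal x))
    rw [h1, add_zero]
    apply Subtype.ext
    rw [hBval]
    have h2 : Tst (P x : H) ∈ K := hTstK _ (P x).2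
    exact congrArg Subtype.val
      (Submodule.orthogonalProjectionOnto_mem_subspace_eq_self (⟨Tst (P x : H), h2⟩ : K))
  -- ⟨S x, _⟩ = B (P x)
  have hSB : ∀ x : H, (⟨S x, hSK x⟩ : K) = B (P x) := by
    intro x
    rw [← hPT x]
    have h1 : P (Tst x) = P (S x) + P (Tst x - S x) := by rw [← map_add]; congr 1; abel
    rw [h1, Submodule.orthogonalProjectionOnto_apply_of_mem_orthogonal (hTS_orth x), add_zero]
    exact (Submodule.orthogonalProjectionOnto_mem_subspace_eq_self (⟨S x, hSK x⟩ : K)).symm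
  -- σK commutes with B
  have hσB : Commute σK B := by
    apply ContinuousLinearMap.ext
    intro k
    apply Subtype.ext
    show sqrtA ((B k : K) : H) = Tst ((σK k : K) : H)
    rw [hBval, hσval]
    exact (hTadj k).symm
  -- reduction lemmas
  have hred : ∀ X : H →L[ℂ] H, sqrtA.comp X = sqrtA → A.comp X = A := by
    intro X hX
    rw [← hsq, ContinuousLinearMap.comp_assoc, hX]
  have hred2 : ∀ X : H →L[ℂ] H, A.comp X = A → ∀ x : H, sqrtA (X x) = sqrtA x := by
    intro X hX x
    set u : H := sqrtA (X x) - sqrtA x with hu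
    have hu1 : sqrtA u = 0 := by
      rw [hu, map_sub]
      have := ContinuousLinearMap.ext_iff.mp hX x
      simp only [ContinuousLinearMap.comp_apply] at this
      rw [← hsq] at this
      simp only [ContinuousLinearMap.comp_apply] at this
      rw [sub_eq_zero]
      exact this
    have hu2 : u ∈ K := by
      rw [hu, ← map_sub]
      exact hmemK _
    have hu3 : u ∈ Kᗮ := hker_orth u hu1
    have : u = 0 := by
      have := (Submodule.mem_orthogonal K u).mp hu3 u hu2
      exact inner_self_eq_zero.mp (inner_eq_zero_symm.mp this)
    rw [hu, sub_eq_zero] at this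
    exact this
  -- K is nontrivial
  have hsqA0 : sqrtA ≠ 0 := by
    intro h0
    apply hA0
    rw [← hsq, h0]
    ext x; simp
  haveI : Nontrivial K := by
    obtain ⟨x, hx⟩ : ∃ x : H, sqrtA x ≠ 0 := by
      by_contra hc
      push_neg at hc
      exact hsqA0 (ContinuousLinearMap.ext fun x => by rw [hc x]; rfl)
    refine nontrivial_of_ne (⟨sqrtA x, hmemK x⟩ : K) 0 ?_
    intro h
    exact hx (by simpa using congrArg Subtype.val h)
  -- norm of ψ x
  have hψnorm : ∀ x : H, ‖ψ x‖ = ‖sqrtA x‖ := by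
    intro x
    rw [Submodule.coe_norm]
    rfl
  -- σK (P x) = ψ x
  have hσP : ∀ x : H, σK (P x) = ψ x := by
    intro x
    apply Subtype.ext
    rw [hσval, hψval]
    have h1 : sqrtA (x - (P x : H)) = 0 := hK_orth _ (K.sub_starProjection_mem_orthogonal x)
    rw [map_sub, sub_eq_zero] at h1
    exact h1.symm
  -- the main equivalence
  have hmain : ∀ lam : ℂ,
      AInv A (lam • (1 : H →L[ℂ] H) - S) ↔ IsUnit (lam • (1 : K →L[ℂ] K) - B) := by
    intro lam
    set X : H →L[ℂ] H := lam • (1 : H →L[ℂ] H) - S with hX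
    set D : K →L[ℂ] K := lam • (1 : K →L[ℂ] K) - B with hD
    have hDψ : ∀ x : H, D (ψ x) = ψ (X x) := by
      intro x
      apply Subtype.ext
      have lhs : ((D (ψ x) : K) : H) = lam • sqrtA x - Tst (sqrtA x) := by
        simp only [hD, ContinuousLinearMap.sub_apply, ContinuousLinearMap.smul_apply,
          ContinuousLinearMap.one_apply, Submodule.coe_sub, Submodule.coe_smul]
        rw [hBval, hψval]
      have rhs : ((ψ (X x) : K) : H) = lam • sqrtA x - Tst (sqrtA x) := by
        rw [hψval]
        simp only [hX, ContinuousLinearMap.sub_apply, ContinuousLinearMap.smul_apply,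
          ContinuousLinearMap.one_apply, map_sub, map_smul]
        rw [hSap x]
      rw [lhs, rhs]
    constructor
    · rintro ⟨hne, R', hR'0, ⟨c, hc0, hcle⟩, h1, h2⟩
      have h1' := hred2 _ h1
      have h2' := hred2 _ h2
      have hb1 : ∀ x : H, D (ψ (R' x)) = ψ x := by
        intro x
        rw [hDψ (R' x)]
        apply Subtype.ext
        rw [hψval, hψval]
        have := h1' x
        simpa using this
      have hb2 : ∀ x : H, ‖ψ x‖ ≤ c * ‖D (ψ x)‖ := by
        intro x
        have h2x := h2' x
        simp only [ContinuousLinearMap.comp_apply] at h2x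
        calc ‖ψ x‖ = ‖sqrtA x‖ := hψnorm x
          _ = ‖sqrtA (R' (X x))‖ := by rw [h2x]
          _ = anorm A (R' (X x)) := (hanorm _).symm
          _ ≤ c * anorm A (X x) := hcle _
          _ = c * ‖sqrtA (X x)‖ := by rw [hanorm]
          _ = c * ‖ψ (X x)‖ := by rw [hψnorm]
          _ = c * ‖D (ψ x)‖ := by rw [hDψ x]
      have hlow : ∀ k : K, ‖k‖ ≤ c * ‖D k‖ := by
        have hclosed : IsClosed {k : K | ‖k‖ ≤ c * ‖D k‖} :=
          isClosed_le continuous_norm (continuous_const.mul (D.continuous.norm))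
        intro k
        have hsub : Set.range ⇑ψ ⊆ {k : K | ‖k‖ ≤ c * ‖D k‖} := by
          rintro _ ⟨x, rfl⟩; exact hb2 x
        have h3 := closure_minimal hsub hclosed
        rw [hdense.closure_eq] at h3
        exact h3 (Set.mem_univ k)
      have hinj : Function.Injective ⇑D := by
        intro a b hab
        have h4 : ‖a - b‖ ≤ c * ‖D (a - b)‖ := hlow _
        rw [map_sub, hab, sub_self, norm_zero, mul_zero] at h4
        exact sub_eq_zero.mp (norm_le_zero_iff.mp h4)
      have hanti : AntilipschitzWith (⟨c, hc0.le⟩ : ℝ≥0) ⇑D :=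
        ContinuousLinearMap.antilipschitz_of_bound D hlow
      have hclosedrange : IsClosed (Set.range ⇑D) :=
        hanti.isClosed_range D.uniformContinuous
      have hsurj : Function.Surjective ⇑D := by
        intro k
        have hsub : Set.range ⇑ψ ⊆ Set.range ⇑D := by
          rintro _ ⟨x, rfl⟩; exact ⟨ψ (R' x), hb1 x⟩
        have h5 := closure_minimal hsub hclosedrange
        rw [hdense.closure_eq] at h5
        exact h5 (Set.mem_univ k)
      exact ContinuousLinearMap.isUnit_iff_bijective.mpr ⟨hinj, hsurj⟩
    · intro hu
      obtain ⟨u, hu_eq⟩ := hu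
      set V : K →L[ℂ] K := ↑u⁻¹ with hV
      have hσD : Commute σK D := by
        have h1 : σK * (lam • (1 : K →L[ℂ] K)) = (lam • (1 : K →L[ℂ] K)) * σK := by
          ext k
          simp
        rw [hD]
        exact Commute.sub_right h1 hσB
      have hσu : Commute σK (u : K →L[ℂ] K) := by rw [hu_eq]; exact hσD
      have hσV : Commute σK V := Commute.units_inv_right hσu
      set Rop : H →L[ℂ] H := K.subtypeL.comp (V.comp P) with hRop
      have hψRop : ∀ x : H, ψ (Rop x) = V (ψ x) := by
        intro x
        have e1 : ψ (Rop x) = σK (V (P x)) := by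
          apply Subtype.ext; rw [hψval, hσval]; rfl
        rw [e1]
        calc σK (V (P x)) = (σK * V) (P x) := rfl
          _ = (V * σK) (P x) := by rw [hσV.eq]
          _ = V (σK (P x)) := rfl
          _ = V (ψ x) := by rw [hσP]
      have hDRop : ∀ x : H, ψ ((X.comp Rop) x) = ψ x := by
        intro x
        rw [ContinuousLinearMap.comp_apply, ← hDψ (Rop x), hψRop x]
        calc D (V (ψ x)) = ((u : K →L[ℂ] K) * V) (ψ x) := by rw [hu_eq]; rfl
          _ = ψ x := by rw [hV, u.mul_inv]; rfl
      have hRopD : ∀ x : H, ψ ((Rop.comp X) x) = ψ x := by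
        intro x
        rw [ContinuousLinearMap.comp_apply, hψRop _, ← hDψ x]
        calc V (D (ψ x)) = (V * (u : K →L[ℂ] K)) (ψ x) := by rw [hu_eq]; rfl
          _ = ψ x := by rw [hV, u.inv_mul]; rfl
      have hg1 : sqrtA.comp (X.comp Rop) = sqrtA := by
        apply ContinuousLinearMap.ext; intro x
        exact congrArg Subtype.val (hDRop x)
      have hg2 : sqrtA.comp (Rop.comp X) = sqrtA := by
        apply ContinuousLinearMap.ext; intro x
        exact congrArg Subtype.val (hRopD x)
      have hXne : X ≠ 0 := by
        intro h0
        apply hA0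
        have := hred _ hg2
        rw [h0, ContinuousLinearMap.comp_zero, ContinuousLinearMap.comp_zero] at this
        exact this.symm
      have hRopne : Rop ≠ 0 := by
        intro h0
        apply hA0
        have := hred _ hg1
        rw [h0, ContinuousLinearMap.comp_zero, ContinuousLinearMap.comp_zero] at this
        exact this.symm
      refine ⟨hXne, Rop, hRopne, ⟨‖V‖ + 1, by positivity, fun x => ?_⟩, hred _ hg1, hred _ hg2⟩
      calc anorm A (Rop x) = ‖sqrtA (Rop x)‖ := hanorm _
        _ = ‖ψ (Rop x)‖ := (hψnorm _).symm
        _ = ‖V (ψ x)‖ := by rw [hψRop x]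
        _ ≤ ‖V‖ * ‖ψ x‖ := V.le_opNorm _
        _ ≤ (‖V‖ + 1) * ‖ψ x‖ := by
            have := norm_nonneg (ψ x)
            nlinarith [norm_nonneg V]
        _ = (‖V‖ + 1) * anorm A x := by rw [hψnorm, hanorm]
  -- σ_A(S) = spectrum of B
  have hspec : sigmaA A S = spectrum ℂ B := by
    ext lam
    simp only [sigmaA, Set.mem_compl_iff, rhoA, Set.mem_setOf_eq, spectrum.mem_iff]
    rw [Algebra.algebraMap_eq_smul_one]
    exact not_congr (hmain lam)
  -- opANorm of S^n is the norm of B^n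
  have hopA : ∀ n : ℕ, opANorm A (S ^ n) = ‖B ^ n‖ := by
    intro n
    have hpt : ∀ x : H, anorm A ((S ^ n) x) = ‖(B ^ n) (ψ x)‖ := by
      intro x
      rw [hanorm, ← hψnorm, hψpow n x]
    have hset : {c : ℝ | 0 ≤ c ∧ ∀ x : H, anorm A ((S ^ n) x) ≤ c * anorm A x}
        = Set.Ici ‖B ^ n‖ := by
      ext c
      simp only [Set.mem_setOf_eq, Set.mem_Ici]
      constructor
      · rintro ⟨hc0, hc⟩
        refine ContinuousLinearMap.opNorm_le_bound _ hc0 ?_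
        have hclosed : IsClosed {k : K | ‖(B ^ n) k‖ ≤ c * ‖k‖} :=
          isClosed_le ((B ^ n).continuous.norm) (continuous_const.mul continuous_norm)
        have hsub : Set.range ⇑ψ ⊆ {k : K | ‖(B ^ n) k‖ ≤ c * ‖k‖} := by
          rintro _ ⟨x, rfl⟩
          have := hc x
          rw [hpt x, hanorm, ← hψnorm] at this
          exact this
        intro k
        have h3 := closure_minimal hsub hclosed
        rw [hdense.closure_eq] at h3
        exact h3 (Set.mem_univ k)
      · intro hc
        refine ⟨(norm_nonneg (B ^ n)).trans hc, fun x => ?_⟩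
        rw [hpt x, hanorm, ← hψnorm]
        calc ‖(B ^ n) (ψ x)‖ ≤ ‖B ^ n‖ * ‖ψ x‖ := (B ^ n).le_opNorm _
          _ ≤ c * ‖ψ x‖ := mul_le_mul_of_nonneg_right hc (norm_nonneg _)
    rw [opANorm, hset, csInf_Ici]
  -- conclude
  have hfinal : supSpecA A S = sSup ((fun z : ℂ => ‖z‖) '' spectrum ℂ B) := by
    rw [supSpecA, hspec]
  rw [hfinal, specLemma B, rA]
  congr 1
  funext n
  rw [hopA]
end

section
/- Let T ∈ B_{A^{1/2}}(H) satisfy TA^{1/2} = A^{1/2}T, and let S ∈ B_{A^{1/2}}(H) be the A^{1/2}-adjoint T^⋄ of T. Then r_A(T) = r_A(S). -/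
variable {H : Type*} [NormedAddCommGroup H] [InnerProductSpace ℂ H] [CompleteSpace H]

private lemma anorm_eq_norm_sqrt (A sqrtA : H →L[ℂ] H) (hsqrt : sqrtA.IsPositive)
    (hsq : sqrtA.comp sqrtA = A) (x : H) : anorm A x = ‖sqrtA x‖ := by
  have h1 : (inner ℂ (A x) x : ℂ) = inner ℂ (sqrtA x) (sqrtA x) := by
    conv_lhs => rw [← hsq]
    rw [ContinuousLinearMap.comp_apply]
    nth_rewrite 1 [← hsqrt.isSelfAdjoint.adjoint_eq]
    rw [ContinuousLinearMap.adjoint_inner_left]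
  rw [anorm, h1, inner_self_eq_norm_sq]
  exact Real.sqrt_sq (norm_nonneg _)

private lemma key_adjoint (B : H →L[ℂ] H) (Ms : Set H) (c : ℝ) (hc0 : 0 ≤ c)
    (hB' : ∀ y ∈ Ms, ContinuousLinearMap.adjoint B y ∈ Ms)
    (h : ∀ y ∈ Ms, ‖B y‖ ≤ c * ‖y‖) :
    ∀ y ∈ Ms, ‖ContinuousLinearMap.adjoint B y‖ ≤ c * ‖y‖ := by
  intro y hy
  set z := ContinuousLinearMap.adjoint B y with hz
  have hzM : z ∈ Ms := hB' y hy
  have h2 : ‖z‖ ^ 2 ≤ c * ‖y‖ * ‖z‖ := by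
    have e2 : (inner ℂ z z : ℂ) = inner ℂ y (B z) := by
      rw [hz, ContinuousLinearMap.adjoint_inner_left]
    calc ‖z‖ ^ 2 = RCLike.re (inner ℂ y (B z) : ℂ) := by
          rw [← e2, inner_self_eq_norm_sq]
      _ ≤ ‖(inner ℂ y (B z) : ℂ)‖ := RCLike.re_le_norm _
      _ ≤ ‖y‖ * ‖B z‖ := norm_inner_le_norm _ _
      _ ≤ ‖y‖ * (c * ‖z‖) := mul_le_mul_of_nonneg_left (h z hzM) (norm_nonneg _)
      _ = c * ‖y‖ * ‖z‖ := by ring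
  rcases eq_or_lt_of_le (norm_nonneg z) with h0 | h0
  · rw [← h0]; positivity
  · nlinarith

private lemma transfer (A sqrtA : H →L[ℂ] H) (hsqrt : sqrtA.IsPositive)
    (hsq : sqrtA.comp sqrtA = A) (B P Q : H →L[ℂ] H)
    (h1 : ∀ x, sqrtA (P x) = B (sqrtA x))
    (h2 : ∀ x, sqrtA (Q x) = ContinuousLinearMap.adjoint B (sqrtA x))
    (c : ℝ) (hc0 : 0 ≤ c) (h : ∀ x, anorm A (P x) ≤ c * anorm A x) :
    ∀ x, anorm A (Q x) ≤ c * anorm A x := by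
  set Ms := closure (Set.range (⇑sqrtA)) with hMs
  have hcl : ∀ y ∈ Ms, ‖B y‖ ≤ c * ‖y‖ := by
    have hsub : Set.range (⇑sqrtA) ⊆ {y | ‖B y‖ ≤ c * ‖y‖} := by
      rintro _ ⟨x, rfl⟩
      have := h x
      rwa [anorm_eq_norm_sqrt A sqrtA hsqrt hsq, anorm_eq_norm_sqrt A sqrtA hsqrt hsq,
        h1] at this
    have hclset : IsClosed {y : H | ‖B y‖ ≤ c * ‖y‖} :=
      isClosed_le (by continuity) (by continuity)
    exact fun y hy => (closure_minimal hsub hclset) hy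
  have hB' : ∀ y ∈ Ms, ContinuousLinearMap.adjoint B y ∈ Ms := by
    intro y hy
    have hmt : Set.MapsTo (⇑(ContinuousLinearMap.adjoint B))
        (Set.range ⇑sqrtA) (Set.range ⇑sqrtA) := by
      rintro _ ⟨x, rfl⟩
      exact ⟨Q x, h2 x⟩
    exact map_mem_closure (ContinuousLinearMap.adjoint B).continuous hy hmt
  intro x
  have := key_adjoint B Ms c hc0 hB' hcl (sqrtA x) (subset_closure ⟨x, rfl⟩)
  rwa [anorm_eq_norm_sqrt A sqrtA hsqrt hsq, anorm_eq_norm_sqrt A sqrtA hsqrt hsq, h2]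

theorem stmt9 (A sqrtA T S : H →L[ℂ] H) (hA : A.IsPositive) (hA0 : A ≠ 0)
    (hsqrt : sqrtA.IsPositive) (hsq : sqrtA.comp sqrtA = A)
    (hT : MemBA A T) (hcomm : T.comp sqrtA = sqrtA.comp T)
    (hSmem : MemBA A S) (hS : IsDiamond sqrtA T S) :
    rA A T = rA A S := by
  have hc1 : ∀ x, sqrtA (T x) = T (sqrtA x) := by
    intro x
    have := ContinuousLinearMap.ext_iff.1 hcomm x
    simpa using this.symm
  have hs1 : ∀ x, sqrtA (S x) = ContinuousLinearMap.adjoint T (sqrtA x) := by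
    intro x
    have := ContinuousLinearMap.ext_iff.1 hS.1 x
    simpa using this
  have hTn : ∀ n : ℕ, ∀ x, sqrtA ((T ^ n) x) = (T ^ n) (sqrtA x) := by
    intro n
    induction n with
    | zero => intro x; simp
    | succ k ih =>
      intro x
      simp only [pow_succ, ContinuousLinearMap.mul_apply]
      rw [ih (T x), hc1 x]
  have hSn : ∀ n : ℕ, ∀ x,
      sqrtA ((S ^ n) x) = (ContinuousLinearMap.adjoint (T ^ n)) (sqrtA x) := by
    have hadj : ∀ n : ℕ, ContinuousLinearMap.adjoint (T ^ n) =
        (ContinuousLinearMap.adjoint T) ^ n := by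
      intro n
      rw [← ContinuousLinearMap.star_eq_adjoint, ← ContinuousLinearMap.star_eq_adjoint,
        star_pow]
    intro n
    rw [hadj n]
    induction n with
    | zero => intro x; simp
    | succ k ih =>
      intro x
      simp only [pow_succ, ContinuousLinearMap.mul_apply]
      rw [ih (S x), hs1 x]
  have hEq : ∀ n : ℕ, opANorm A (T ^ n) = opANorm A (S ^ n) := by
    intro n
    unfold opANorm
    congr 1
    ext c
    simp only [Set.mem_setOf_eq]
    constructor
    · rintro ⟨hc0, hc⟩
      exact ⟨hc0, transfer A sqrtA hsqrt hsq (T ^ n) (T ^ n) (S ^ n)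
        (hTn n) (hSn n) c hc0 hc⟩
    · rintro ⟨hc0, hc⟩
      refine ⟨hc0, transfer A sqrtA hsqrt hsq (ContinuousLinearMap.adjoint (T ^ n))
        (S ^ n) (T ^ n) (hSn n) ?_ c hc0 hc⟩
      intro x
      rw [ContinuousLinearMap.adjoint_adjoint]
      exact hTn n x
  unfold rA
  exact iInf_congr fun n => by rw [hEq n]
end

section
/- Let T ∈ B_{A^{1/2}}(H) and let S ∈ B_{A^{1/2}}(H) be the A^{1/2}-adjoint T^⋄ of T. If λ ∈ ℂ satisfies |λ| > ‖T‖_A and |λ| > ‖S‖_A, then λ ∈ ρ_A(S), i.e., λI − S is A-invertible in B_{A^{1/2}}(H). -/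
variable {H : Type*} [NormedAddCommGroup H] [InnerProductSpace ℂ H] [CompleteSpace H]

set_option maxHeartbeats 1600000 in
set_option synthInstance.maxHeartbeats 400000 in
theorem stmt10 (A sqrtA T S : H →L[ℂ] H) (hA : A.IsPositive) (hA0 : A ≠ 0)
    (hsqrt : sqrtA.IsPositive) (hsq : sqrtA.comp sqrtA = A)
    (hT : MemBA A T) (hSmem : MemBA A S) (hS : IsDiamond sqrtA T S)
    (lam : ℂ) (hlamT : opANorm A T < ‖lam‖) (hlamS : opANorm A S < ‖lam‖) :
    lam ∈ rhoA A S := by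
  classical
  have hadj : ContinuousLinearMap.adjoint sqrtA = sqrtA :=
    ContinuousLinearMap.isSelfAdjoint_iff'.mp hsqrt.isSelfAdjoint
  -- extract good constants
  obtain ⟨cS, hcS, hcSlt⟩ :
      ∃ c, (0 ≤ c ∧ ∀ x : H, anorm A (S x) ≤ c * anorm A x) ∧ c < ‖lam‖ := by
    obtain ⟨c, hc, hb⟩ := hSmem
    exact exists_lt_of_csInf_lt ⟨c, le_of_lt hc, hb⟩ hlamS
  obtain ⟨cT, hcT, hcTlt⟩ :
      ∃ c, (0 ≤ c ∧ ∀ x : H, anorm A (T x) ≤ c * anorm A x) ∧ c < ‖lam‖ := by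
    obtain ⟨c, hc, hb⟩ := hT
    exact exists_lt_of_csInf_lt ⟨c, le_of_lt hc, hb⟩ hlamT
  have hlampos : (0:ℝ) < ‖lam‖ := lt_of_le_of_lt hcS.1 hcSlt
  have hlam0 : lam ≠ 0 := by
    intro h; rw [h] at hlampos; simp at hlampos
  -- A = sqrtA ∘ sqrtA pointwise
  have hAx : ∀ x : H, A x = sqrtA (sqrtA x) := by
    intro x; rw [← hsq]; rfl
  -- moving sqrtA across inner products
  have hinner : ∀ x y : H, (inner ℂ (sqrtA x) y : ℂ) = inner ℂ x (sqrtA y) := by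
    intro x y
    nth_rewrite 1 [← hadj]
    exact ContinuousLinearMap.adjoint_inner_left sqrtA y x
  -- anorm is the norm of sqrtA x
  have hanorm : ∀ x : H, anorm A x = ‖sqrtA x‖ := by
    intro x
    rw [anorm, hAx, hinner (sqrtA x) x]
    rw [inner_self_eq_norm_sq (𝕜 := ℂ) (sqrtA x)]
    exact Real.sqrt_sq (norm_nonneg _)
  set R : Submodule ℂ H := (LinearMap.range (sqrtA : H →ₗ[ℂ] H)).topologicalClosure with hR
  haveI : CompleteSpace R := (Submodule.isClosed_topologicalClosure _).completeSpace_coe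
  have hrange : ∀ x : H, sqrtA x ∈ R :=
    fun x => Submodule.le_topologicalClosure _ (LinearMap.mem_range_self _ x)
  have hRcoe : (R : Set H) = closure (Set.range ⇑sqrtA) := by
    rw [hR, Submodule.topologicalClosure_coe, LinearMap.coe_range, ContinuousLinearMap.coe_coe]
  have hSR : ∀ x : H, S x ∈ R := by
    intro x
    have := hS.2 (Set.mem_range_self x)
    rw [← hRcoe] at this
    exact this
  -- sqrtA vanishes on Rᗮ
  have hperp : ∀ z ∈ Rᗮ, sqrtA z = 0 := by
    intro z hz
    have h0 : (inner ℂ (sqrtA (sqrtA z)) z : ℂ) = 0 := by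
      rw [Submodule.mem_orthogonal] at hz
      exact hz _ (hrange (sqrtA z))
    rw [hinner] at h0
    exact inner_self_eq_zero.mp h0
  have hAperp : ∀ z ∈ Rᗮ, A z = 0 := by
    intro z hz; rw [hAx, hperp z hz, map_zero]
  -- elements of R killed by sqrtA are zero
  have horth : ∀ v : H, sqrtA v = 0 → v ∈ Rᗮ := by
    intro v hv
    rw [Submodule.mem_orthogonal]
    intro u hu
    have hcl : IsClosed {u : H | (inner ℂ u v : ℂ) = 0} :=
      isClosed_eq (Continuous.inner continuous_id continuous_const) continuous_const
    have hsub : (R : Set H) ⊆ {u : H | (inner ℂ u v : ℂ) = 0} := by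
      rw [hRcoe]
      refine closure_minimal ?_ hcl
      rintro _ ⟨x, rfl⟩
      show (inner ℂ (sqrtA x) v : ℂ) = 0
      rw [hinner, hv, inner_zero_right]
    exact hsub hu
  have hker : ∀ v ∈ R, sqrtA v = 0 → v = 0 := by
    intro v hv h0
    have := (Submodule.mem_orthogonal _ _).mp (horth v h0) v hv
    exact inner_self_eq_zero.mp this
  -- S vanishes on Rᗮ
  have hSap : ∀ x : H, sqrtA (S x) = ContinuousLinearMap.adjoint T (sqrtA x) := by
    intro x
    have := congrArg (fun (f : H →L[ℂ] H) => f x) hS.1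
    simpa using this
  have hSperp : ∀ z ∈ Rᗮ, S z = 0 := by
    intro z hz
    refine hker _ (hSR z) ?_
    rw [hSap, hperp z hz, map_zero]
  -- projection and inclusion
  set π : H →L[ℂ] R := R.orthogonalProjectionOnto with hπdef
  set ι : R →L[ℂ] H := R.subtypeL with hιdef
  have hsubperp : ∀ x : H, x - ι (π x) ∈ Rᗮ := fun x =>
    R.sub_starProjection_mem_orthogonal x
  have hsqrtπ : ∀ x : H, sqrtA (ι (π x)) = sqrtA x := by
    intro x
    have h := hperp _ (hsubperp x)
    rw [map_sub] at h
    exact (sub_eq_zero.mp h).symm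
  have hAπ : ∀ x : H, A (ι (π x)) = A x := by
    intro x
    rw [hAx, hAx x, hsqrtπ]
  have hιπ : ∀ w : H, w ∈ R → ι (π w) = w := by
    intro w hw
    exact R.starProjection_eq_self_iff.mpr hw
  -- the compression of S to R
  set Shat : R →L[ℂ] R := (π.comp S).comp ι with hShatdef
  have hShat_apply : ∀ v : R, Shat v = π (S (ι v)) := fun v => rfl
  -- adjoint of Shat
  have hShat_adj : ContinuousLinearMap.adjoint Shat
      = (π.comp (ContinuousLinearMap.adjoint S)).comp ι := by
    rw [hShatdef, ContinuousLinearMap.adjoint_comp, ContinuousLinearMap.adjoint_comp,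
      hπdef, hιdef, Submodule.adjoint_subtypeL, Submodule.adjoint_orthogonalProjectionOnto]
    rfl
  -- S* ∘ sqrtA = sqrtA ∘ T
  have hSstar : ∀ x : H, ContinuousLinearMap.adjoint S (sqrtA x) = sqrtA (T x) := by
    intro x
    have h := congrArg ContinuousLinearMap.adjoint hS.1
    rw [ContinuousLinearMap.adjoint_comp, ContinuousLinearMap.adjoint_comp,
      ContinuousLinearMap.adjoint_adjoint, hadj] at h
    have := congrArg (fun (f : H →L[ℂ] H) => f x) h
    simpa using this
  -- norm bound for Shat via its adjoint
  have hπnorm : ∀ w : H, ‖π w‖ ≤ ‖w‖ := by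
    intro w
    calc ‖π w‖ ≤ ‖π‖ * ‖w‖ := π.le_opNorm w
    _ ≤ 1 * ‖w‖ := by
        apply mul_le_mul_of_nonneg_right _ (norm_nonneg w)
        rw [hπdef]; exact R.orthogonalProjectionOnto_norm_le
    _ = ‖w‖ := one_mul _
  have hadjbound : ∀ v : R, ‖π (ContinuousLinearMap.adjoint S (ι v))‖ ≤ cT * ‖v‖ := by
    intro v
    have hv : (v : H) ∈ (R : Set H) := v.2
    have hcl : IsClosed {w : H | ‖π (ContinuousLinearMap.adjoint S w)‖ ≤ cT * ‖w‖} := by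
      apply isClosed_le
      · exact (π.comp (ContinuousLinearMap.adjoint S)).continuous.norm
      · exact continuous_const.mul continuous_norm
    have hsub : (R : Set H) ⊆ {w : H | ‖π (ContinuousLinearMap.adjoint S w)‖ ≤ cT * ‖w‖} := by
      rw [hRcoe]
      refine closure_minimal ?_ hcl
      rintro _ ⟨x, rfl⟩
      show ‖π (ContinuousLinearMap.adjoint S (sqrtA x))‖ ≤ cT * ‖sqrtA x‖
      rw [hSstar]
      calc ‖π (sqrtA (T x))‖ ≤ ‖sqrtA (T x)‖ := hπnorm _
      _ = anorm A (T x) := (hanorm _).symm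
      _ ≤ cT * anorm A x := hcT.2 x
      _ = cT * ‖sqrtA x‖ := by rw [hanorm]
    exact hsub hv
  have hShat_norm : ‖Shat‖ ≤ cT := by
    have h1 : ‖ContinuousLinearMap.adjoint Shat‖ ≤ cT := by
      apply ContinuousLinearMap.opNorm_le_bound _ hcT.1
      intro v
      rw [hShat_adj]
      exact hadjbound v
    calc ‖Shat‖ = ‖ContinuousLinearMap.adjoint Shat‖ :=
      (LinearIsometryEquiv.norm_map (ContinuousLinearMap.adjoint
        (𝕜 := ℂ) (E := R) (F := R)) Shat).symm
    _ ≤ cT := h1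
  -- invert lam • 1 - Shat in B(R)
  haveI : NormSMulClass ℂ (↥R →L[ℂ] ↥R) :=
    (inferInstance : NormedSpace ℂ (↥R →L[ℂ] ↥R)).toNormSMulClass
  have hlt : ‖lam⁻¹ • Shat‖ < 1 := by
    rw [norm_smul lam⁻¹ Shat, norm_inv]
    calc ‖lam‖⁻¹ * ‖Shat‖ ≤ ‖lam‖⁻¹ * cT := by
          apply mul_le_mul_of_nonneg_left hShat_norm (inv_nonneg.mpr (le_of_lt hlampos))
    _ < 1 := by
        rw [inv_mul_lt_iff₀ hlampos, mul_one]
        exact hcTlt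
  set u : (R →L[ℂ] R)ˣ := Units.oneSub (lam⁻¹ • Shat) hlt with hudef
  have huval : (u : R →L[ℂ] R) = 1 - lam⁻¹ • Shat := rfl
  set Q : R →L[ℂ] R := lam⁻¹ • (↑u⁻¹ : R →L[ℂ] R) with hQdef
  have hfact : lam • (1 : R →L[ℂ] R) - Shat = lam • (u : R →L[ℂ] R) := by
    rw [huval, smul_sub, smul_smul, mul_inv_cancel₀ hlam0, one_smul]
  have hQ1 : (lam • (1 : R →L[ℂ] R) - Shat) * Q = 1 := by
    rw [hfact, hQdef, ContinuousLinearMap.mul_def, ContinuousLinearMap.smul_comp,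
      ContinuousLinearMap.comp_smul, smul_smul, mul_inv_cancel₀ hlam0, one_smul,
      ← ContinuousLinearMap.mul_def, u.mul_inv]
  have hQ2 : Q * (lam • (1 : R →L[ℂ] R) - Shat) = 1 := by
    rw [hfact, hQdef, ContinuousLinearMap.mul_def, ContinuousLinearMap.smul_comp,
      ContinuousLinearMap.comp_smul, smul_smul, inv_mul_cancel₀ hlam0, one_smul,
      ← ContinuousLinearMap.mul_def, u.inv_mul]
  have hQ1' : ∀ v : R, (lam • (1 : R →L[ℂ] R) - Shat) (Q v) = v := by
    intro v
    have := congrArg (fun (f : R →L[ℂ] R) => f v) hQ1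
    simpa using this
  have hQ2' : ∀ v : R, Q ((lam • (1 : R →L[ℂ] R) - Shat) v) = v := by
    intro v
    have := congrArg (fun (f : R →L[ℂ] R) => f v) hQ2
    simpa using this
  -- the candidate A-inverse
  set Sinv : H →L[ℂ] H := (ι.comp Q).comp π with hSinvdef
  have hSinv_apply : ∀ x : H, Sinv x = ι (Q (π x)) := fun x => rfl
  -- key identity on R
  have hcompR : ∀ v : R, (lam • (1 : H →L[ℂ] H) - S) (ι v)
      = ι ((lam • (1 : R →L[ℂ] R) - Shat) v) := by
    intro v
    have h1 : ι (π (S (ι v))) = S (ι v) := hιπ _ (hSR _)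
    simp only [ContinuousLinearMap.sub_apply, ContinuousLinearMap.smul_apply,
      ContinuousLinearMap.one_apply, map_sub, map_smul, hShat_apply, h1]
  have hkey1 : ∀ x : H, (lam • (1 : H →L[ℂ] H) - S) (Sinv x) = ι (π x) := by
    intro x
    rw [hSinv_apply, hcompR, hQ1']
  have hkey2 : ∀ x : H, Sinv ((lam • (1 : H →L[ℂ] H) - S) x) = ι (π x) := by
    intro x
    have hSx : S x = S (ι (π x)) := by
      have h := hSperp _ (hsubperp x)
      rw [map_sub] at h
      exact (sub_eq_zero.mp h)
    have harg : π ((lam • (1 : H →L[ℂ] H) - S) x)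
        = (lam • (1 : R →L[ℂ] R) - Shat) (π x) := by
      simp only [ContinuousLinearMap.sub_apply, ContinuousLinearMap.smul_apply,
        ContinuousLinearMap.one_apply, map_sub, map_smul, hShat_apply]
      rw [← hSx]
    rw [hSinv_apply, harg, hQ2']
  -- the operator lam • 1 - S is nonzero
  obtain ⟨x₀, hx₀⟩ : ∃ x : H, A x ≠ 0 := by
    by_contra h
    push_neg at h
    exact hA0 (ContinuousLinearMap.ext h)
  have hsx₀ : sqrtA x₀ ≠ 0 := by
    intro h
    apply hx₀
    rw [hAx, h, map_zero]
  have hsx₀pos : (0:ℝ) < ‖sqrtA x₀‖ := norm_pos_iff.mpr hsx₀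
  have hTne : lam • (1 : H →L[ℂ] H) - S ≠ 0 := by
    intro h
    have h1 : S x₀ = lam • x₀ := by
      have := congrArg (fun (f : H →L[ℂ] H) => f x₀) h
      simp only [ContinuousLinearMap.sub_apply, ContinuousLinearMap.smul_apply,
        ContinuousLinearMap.one_apply, ContinuousLinearMap.zero_apply] at this
      exact (sub_eq_zero.mp this).symm
    have h2 : anorm A (S x₀) ≤ cS * anorm A x₀ := hcS.2 x₀
    rw [h1, hanorm, hanorm, map_smul, norm_smul] at h2
    have : ‖lam‖ ≤ cS := by
      have := le_of_mul_le_mul_right h2 hsx₀pos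
      exact this
    linarith
  -- Sinv is nonzero
  have hSinvne : Sinv ≠ 0 := by
    intro h
    have h1 : Sinv x₀ = 0 := by rw [h]; rfl
    rw [hSinv_apply] at h1
    have h2 : Q (π x₀) = 0 := by
      rwa [hιdef, Submodule.subtypeL_apply, ZeroMemClass.coe_eq_zero] at h1
    have h3 : π x₀ = 0 := by
      have h5 := hQ1' (π x₀)
      rw [h2, map_zero] at h5
      exact h5.symm
    have h4 : x₀ ∈ Rᗮ := by
      have := hsubperp x₀
      rw [h3, map_zero, sub_zero] at this
      exact this
    exact hsx₀ (hperp _ h4)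
  -- Sinv ∈ B_{A^{1/2}}
  have hSinvmem : MemBA A Sinv := by
    have hd : (0:ℝ) < ‖lam‖ - cS := by linarith
    refine ⟨(‖lam‖ - cS)⁻¹, inv_pos.mpr hd, ?_⟩
    intro x
    have hk := congrArg sqrtA (hkey1 x)
    rw [hsqrtπ] at hk
    have hexp : (lam • (1 : H →L[ℂ] H) - S) (Sinv x) = lam • Sinv x - S (Sinv x) := by
      simp
    rw [hexp, map_sub, map_smul] at hk
    have h5 : ‖lam‖ * ‖sqrtA (Sinv x)‖ ≤ ‖sqrtA x‖ + cS * ‖sqrtA (Sinv x)‖ := by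
      have heq : lam • sqrtA (Sinv x) = sqrtA x + sqrtA (S (Sinv x)) := by
        rw [← hk]; abel
      calc ‖lam‖ * ‖sqrtA (Sinv x)‖ = ‖lam • sqrtA (Sinv x)‖ := (norm_smul _ _).symm
      _ = ‖sqrtA x + sqrtA (S (Sinv x))‖ := by rw [heq]
      _ ≤ ‖sqrtA x‖ + ‖sqrtA (S (Sinv x))‖ := norm_add_le _ _
      _ ≤ ‖sqrtA x‖ + cS * ‖sqrtA (Sinv x)‖ := by
          have h6 := hcS.2 (Sinv x)
          rw [hanorm, hanorm] at h6
          linarith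
    rw [hanorm (Sinv x), hanorm x, ← div_eq_inv_mul, le_div_iff₀ hd]
    nlinarith
  -- the composition identities
  have hcomp1 : A.comp ((lam • (1 : H →L[ℂ] H) - S).comp Sinv) = A := by
    ext x
    show A ((lam • (1 : H →L[ℂ] H) - S) (Sinv x)) = A x
    rw [hkey1, hAπ]
  have hcomp2 : A.comp (Sinv.comp (lam • (1 : H →L[ℂ] H) - S)) = A := by
    ext x
    show A (Sinv ((lam • (1 : H →L[ℂ] H) - S) x)) = A x
    rw [hkey2, hAπ]
  exact ⟨hTne, Sinv, hSinvne, hSinvmem, hcomp1, hcomp2⟩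
end
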